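/- arXiv:0707.4580 — 5 statements merged into one kernel-verified Lean document; each statement's English description precedes it below -/
import Mathlib

section
/- For every integer c ≥ 2 and every integer d ≥ 1, there exists a c-edge-colored graph G with δ_mon(G) = d that has no properly colored cycle. -/
/-- The number of edges of color `i` incident with the vertex `x` in the
`c`-edge-colored graph `(G, χ)`. -/
noncomputable def monDeg {V : Type} {c : ℕ} (G : SimpleGraph V) (χ : Sym2 V → Fin c)
    (x : V) (i : Fin c) : ℕ :=
  Nat.card {y : V // G.Adj x y ∧ χ s(x, y) = i}

/-- The minimum monochromatic degree `δ_mon(G)` of a `c`-edge-colored graph. -/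
noncomputable def minMonDeg {V : Type} {c : ℕ} (G : SimpleGraph V) (χ : Sym2 V → Fin c) : ℕ :=
  sInf {k : ℕ | ∃ (x : V) (i : Fin c), monDeg G χ x i = k}

/-- `(G, χ)` has a properly colored cycle: a cycle in which no two consecutive
edges (cyclically, including the final/first pair) have the same color. -/
def HasProperlyColoredCycle {V : Type} {c : ℕ} (G : SimpleGraph V)
    (χ : Sym2 V → Fin c) : Prop :=
  ∃ (v : V) (w : G.Walk v v), w.IsCycle ∧
    ∀ i : Fin w.edges.length,
      χ (w.edges.get i) ≠
        χ (w.edges.get ⟨((i : ℕ) + 1) % w.edges.length, Nat.mod_lt _ i.pos⟩)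

namespace NoPCC

variable {c d : ℕ}

abbrev Vt (c d : ℕ) := {w : List (Fin c) // ∀ i, w.count i ≤ d}

lemma length_le_of_count (w : List (Fin c)) (h : ∀ i, w.count i ≤ d) : w.length ≤ c * d := by
  classical
  calc w.length = ∑ i : Fin c, w.count i := by
        have := Multiset.sum_count_eq_card (s := (Finset.univ : Finset (Fin c)))
          (m := (w : Multiset (Fin c))) (fun a _ => Finset.mem_univ a)
        simpa using this.symm
    _ ≤ ∑ _i : Fin c, d := Finset.sum_le_sum (fun i _ => h i)
    _ = c * d := by simp [Finset.sum_const, mul_comm]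

noncomputable instance : Fintype (Vt c d) := by
  classical
  apply Fintype.ofInjective (fun w : Vt c d => fun j : Fin (c * d) => w.val[(j : ℕ)]?)
  intro x y hxy
  apply Subtype.ext
  apply List.ext_getElem?
  intro n
  by_cases hn : n < c * d
  · exact congrFun hxy ⟨n, hn⟩
  · rw [List.getElem?_eq_none_iff.2, List.getElem?_eq_none_iff.2]
    · exact le_trans (length_le_of_count _ y.2) (le_of_not_gt hn)
    · exact le_trans (length_le_of_count _ x.2) (le_of_not_gt hn)

def Gr (c d : ℕ) : SimpleGraph (Vt c d) where
  Adj x y := x ≠ y ∧ (x.val <+: y.val ∨ y.val <+: x.val)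
  symm := by constructor; intro x y ⟨h1, h2⟩; exact ⟨h1.symm, h2.symm⟩
  loopless := by constructor; intro x h; exact h.1 rfl

end NoPCC

namespace NoPCC

def colFun (hc : 0 < c) (x y : List (Fin c)) : Fin c :=
  if h : x.length < y.length then y.get ⟨x.length, h⟩
  else if h' : y.length < x.length then x.get ⟨y.length, h'⟩
  else ⟨0, hc⟩

lemma colFun_comm (hc : 0 < c) (x y : List (Fin c)) : colFun hc x y = colFun hc y x := by
  unfold colFun
  split_ifs <;> first | rfl | omega

noncomputable def col (c d : ℕ) (hc : 0 < c) : Sym2 (Vt c d) → Fin c :=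
  Sym2.lift ⟨fun x y => colFun hc x.val y.val, fun x y => colFun_comm hc _ _⟩

lemma col_mk (hc : 0 < c) (x y : Vt c d) : col c d hc s(x, y) = colFun hc x.val y.val := rfl

lemma card_pos_count (l : List (Fin c)) (i : Fin c) :
    Fintype.card {t : Fin l.length // l.get t = i} = l.count i := by
  induction l with
  | nil => simp
  | cons a t ih =>
    rw [Fintype.card_subtype] at *
    rw [Finset.card_filter] at *
    show (∑ j : Fin (t.length + 1), if (a :: t).get j = i then 1 else 0) = _
    rw [Fin.sum_univ_succ]
    simp only [List.get_eq_getElem, Fin.val_succ, List.getElem_cons_succ,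
      List.getElem_cons_zero, Fin.val_zero]
    simp only [List.get_eq_getElem] at ih
    rw [ih, List.count_cons]
    by_cases h : a = i
    · simp [h, Nat.add_comm, beq_iff_eq]
    · have h2 : ¬ (i = a) := fun h' => h h'.symm
      simp [h, h2, beq_iff_eq]

end NoPCC

namespace NoPCC

variable {c d : ℕ}

def prefixVert (x : Vt c d) (t : ℕ) : Vt c d :=
  ⟨x.val.take t, fun i => le_trans ((x.val.take_sublist t).count_le i) (x.2 i)⟩

lemma prefixVert_length (x : Vt c d) {t : ℕ} (ht : t < x.val.length) :
    (prefixVert x t).val.length = t := by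
  simp [prefixVert]; omega

lemma adj_prefixVert (x : Vt c d) {t : ℕ} (ht : t < x.val.length) :
    (Gr c d).Adj x (prefixVert x t) := by
  constructor
  · intro h
    have h2 := congrArg (fun z : Vt c d => z.val.length) h
    simp only [prefixVert, List.length_take] at h2
    omega
  · right; exact List.take_prefix t x.val

lemma col_prefixVert (hc : 0 < c) (x : Vt c d) {t : ℕ} (ht : t < x.val.length) :
    col c d hc s(x, prefixVert x t) = x.val.get ⟨t, ht⟩ := by
  rw [col_mk]
  unfold colFun
  have hlen := prefixVert_length x ht
  simp only [hlen]
  rw [dif_neg (by omega), dif_pos ht]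

def extVert (x : Vt c d) (i : Fin c) (m : ℕ) (h : x.val.count i + m ≤ d) : Vt c d :=
  ⟨x.val ++ List.replicate m i, by
    intro j
    rw [List.count_append, List.count_replicate]
    by_cases hj : j = i
    · subst hj; simpa using h
    · have hj' : ¬(i = j) := fun h' => hj h'.symm
      simp only [beq_iff_eq, hj', if_false]
      simpa using x.2 j⟩

lemma extVert_length (x : Vt c d) (i : Fin c) (m : ℕ) (h : x.val.count i + m ≤ d) :
    (extVert x i m h).val.length = x.val.length + m := by
  simp [extVert]

lemma adj_extVert (x : Vt c d) (i : Fin c) {m : ℕ} (hm : 1 ≤ m)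
    (h : x.val.count i + m ≤ d) : (Gr c d).Adj x (extVert x i m h) := by
  constructor
  · intro h2
    have h3 := congrArg (fun z : Vt c d => z.val.length) h2
    simp only [extVert, List.length_append, List.length_replicate] at h3
    omega
  · left; exact List.prefix_append _ _

lemma col_extVert (hc : 0 < c) (x : Vt c d) (i : Fin c) {m : ℕ} (hm : 1 ≤ m)
    (h : x.val.count i + m ≤ d) : col c d hc s(x, extVert x i m h) = i := by
  rw [col_mk]
  unfold colFun
  have hlen := extVert_length x i m h
  simp only [hlen]
  rw [dif_pos (by omega)]
  show (x.val ++ List.replicate m i).get ⟨x.val.length, _⟩ = i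
  simp [List.get_eq_getElem, List.getElem_append_right, le_refl]

end NoPCC

namespace NoPCC

lemma d_le_card (hc : 0 < c) (x : Vt c d) (i : Fin c) :
    d ≤ Nat.card {y : Vt c d // (Gr c d).Adj x y ∧ col c d hc s(x, y) = i} := by
  classical
  set k := x.val.count i with hk
  have hkd : k ≤ d := x.2 i
  have hcard : Fintype.card {t : Fin x.val.length // x.val.get t = i} = k := card_pos_count _ _
  let e : Fin k ≃ {t : Fin x.val.length // x.val.get t = i} :=
    (Fintype.equivFinOfCardEq hcard).symm
  let Φ : Fin k ⊕ Fin (d - k) → {y : Vt c d // (Gr c d).Adj x y ∧ col c d hc s(x, y) = i} :=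
    fun j =>
      Sum.elim
        (fun j => ⟨prefixVert x ((e j).val : ℕ), adj_prefixVert x (e j).val.isLt, by
          rw [col_prefixVert hc x (e j).val.isLt]
          simpa using (e j).2⟩)
        (fun m => ⟨extVert x i (m.val + 1) (by omega), adj_extVert x i (by omega) _,
          col_extVert hc x i (by omega) _⟩) j
  have hΦ : Function.Injective Φ := by
    intro a b hab
    have hlen := congrArg (fun z : {y : Vt c d // _} => z.val.val.length) hab
    match a, b with
    | Sum.inl a, Sum.inl b =>
      simp only [Φ, Sum.elim_inl] at hlen
      rw [prefixVert_length x (e a).val.isLt, prefixVert_length x (e b).val.isLt] at hlen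
      have : (e a) = (e b) := Subtype.ext (Fin.ext hlen)
      rw [e.injective this]
    | Sum.inl a, Sum.inr b =>
      simp only [Φ, Sum.elim_inl, Sum.elim_inr] at hlen
      rw [prefixVert_length x (e a).val.isLt, extVert_length] at hlen
      have := (e a).val.isLt
      omega
    | Sum.inr a, Sum.inl b =>
      simp only [Φ, Sum.elim_inl, Sum.elim_inr] at hlen
      rw [prefixVert_length x (e b).val.isLt, extVert_length] at hlen
      have := (e b).val.isLt
      omega
    | Sum.inr a, Sum.inr b =>
      simp only [Φ, Sum.elim_inr] at hlen
      rw [extVert_length, extVert_length] at hlen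
      have : a = b := Fin.ext (by omega)
      rw [this]
  have hle := Nat.card_le_card_of_injective Φ hΦ
  have : Nat.card (Fin k ⊕ Fin (d - k)) = d := by
    rw [Nat.card_sum]
    simp only [Nat.card_eq_fintype_card, Fintype.card_fin]
    omega
  omega

end NoPCC

namespace NoPCC

lemma card_leaf (hc : 0 < c) (x : Vt c d) (hx : ∀ j, x.val.count j = d) (i : Fin c) :
    Nat.card {y : Vt c d // (Gr c d).Adj x y ∧ col c d hc s(x, y) = i} = d := by
  classical
  let f : {t : Fin x.val.length // x.val.get t = i} →
      {y : Vt c d // (Gr c d).Adj x y ∧ col c d hc s(x, y) = i} :=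
    fun t => ⟨prefixVert x (t.val : ℕ), adj_prefixVert x t.val.isLt, by
      rw [col_prefixVert hc x t.val.isLt]
      simpa using t.2⟩
  have hbij : Function.Bijective f := by
    constructor
    · intro a b hab
      have hlen := congrArg (fun z : {y : Vt c d // _} => z.val.val.length) hab
      simp only [f] at hlen
      rw [prefixVert_length x a.val.isLt, prefixVert_length x b.val.isLt] at hlen
      exact Subtype.ext (Fin.ext hlen)
    · rintro ⟨y, hadj, hcol⟩
      rcases hadj.2 with hpre | hpre
      · exfalso
        obtain ⟨r, hr⟩ := hpre
        have hrne : r ≠ [] := by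
          intro h
          subst h
          exact hadj.1 (Subtype.ext (by simpa using hr))
        have hmem : r.head hrne ∈ r := List.head_mem hrne
        have h1 : 1 ≤ r.count (r.head hrne) := List.count_pos_iff.2 hmem
        have h2 := y.2 (r.head hrne)
        rw [← hr, List.count_append] at h2
        rw [hx (r.head hrne)] at h2
        omega
      · have hlt : y.val.length < x.val.length := by
          rcases lt_or_eq_of_le hpre.length_le with h | h
          · exact h
          · exact absurd (Subtype.ext (hpre.eq_of_length h).symm) hadj.1
        rw [col_mk] at hcol
        unfold colFun at hcol
        rw [dif_neg (by omega), dif_pos hlt] at hcol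
        refine ⟨⟨⟨y.val.length, hlt⟩, hcol⟩, ?_⟩
        apply Subtype.ext
        apply Subtype.ext
        show x.val.take y.val.length = y.val
        exact (List.prefix_iff_eq_take.1 hpre).symm
  have h1 := Nat.card_eq_of_bijective f hbij
  rw [← h1, Nat.card_eq_fintype_card, card_pos_count, hx i]

def leafList (c d : ℕ) : List (Fin c) := (List.finRange c).flatMap (fun j => List.replicate d j)

lemma count_leafList (i : Fin c) : (leafList c d).count i = d := by
  have key : ∀ (l : List (Fin c)), l.Nodup → ∀ i : Fin c,
      (l.flatMap (fun j => List.replicate d j)).count i = if i ∈ l then d else 0 := by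
    intro l hl
    induction l with
    | nil => simp
    | cons a t ih =>
      intro i
      rw [List.flatMap_cons, List.count_append, List.count_replicate,
        ih (List.Nodup.of_cons hl) i]
      by_cases hi : i = a
      · subst hi
        have : i ∉ t := (List.nodup_cons.1 hl).1
        simp [this]
      · have h1 : ¬(a = i) := fun h' => hi h'.symm
        simp [hi, h1, List.mem_cons]
  rw [leafList, key _ (List.nodup_finRange c) i, if_pos (List.mem_finRange i)]

def leafVert (c d : ℕ) : Vt c d := ⟨leafList c d, fun i => le_of_eq (count_leafList i)⟩

end NoPCC

namespace NoPCC

open SimpleGraph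

lemma support_getElem {V : Type} {G : SimpleGraph V} {u v : V} (w : G.Walk u v) :
    ∀ (i : ℕ) (h : i < w.support.length), w.support[i] = w.getVert i := by
  induction w with
  | nil =>
    intro i h
    simp only [Walk.support_nil, List.length_singleton] at h ⊢
    interval_cases i
    simp [Walk.getVert]
  | cons hadj p ih =>
    intro i h
    match i with
    | 0 => simp [Walk.support_cons, Walk.getVert_zero]
    | (j + 1) =>
      simp only [Walk.support_cons, List.getElem_cons_succ, Walk.getVert_cons_succ, ih]

lemma edges_getElem {V : Type} {G : SimpleGraph V} {u v : V} (w : G.Walk u v) :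
    ∀ (i : ℕ) (h : i < w.edges.length), w.edges[i] = s(w.getVert i, w.getVert (i + 1)) := by
  induction w with
  | nil => intro i h; simp [Walk.edges_nil] at h
  | cons hadj p ih =>
    intro i h
    match i with
    | 0 => simp [Walk.edges_cons, Walk.getVert_zero, Walk.getVert_cons_succ]
    | (j + 1) =>
      simp only [Walk.edges_cons, List.getElem_cons_succ, Walk.getVert_cons_succ, ih]

lemma getD_rotate {α : Type*} [Inhabited α] (L : List α) (n i : ℕ) (hi : i < L.length) :
    (L.rotate n).getD i default = L.getD ((i + n) % L.length) default := by
  have h0 : 0 < L.length := by omega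
  rw [List.getD_eq_getElem _ _ (by simpa using hi), List.getElem_rotate,
    List.getD_eq_getElem _ _ (Nat.mod_lt _ h0)]

lemma pc_rot {α β : Type*} [Inhabited α] (f : α → β) (L : List α) (n : ℕ)
    (hL : ∀ i, i < L.length →
      f (L.getD i default) ≠ f (L.getD ((i + 1) % L.length) default)) :
    ∀ i, i < (L.rotate n).length →
      f ((L.rotate n).getD i default) ≠
        f ((L.rotate n).getD ((i + 1) % (L.rotate n).length) default) := by
  intro i hi
  rw [List.length_rotate] at hi ⊢
  have h0 : 0 < L.length := by omega
  rw [getD_rotate _ _ _ hi, getD_rotate _ _ _ (Nat.mod_lt _ h0), Nat.mod_add_mod]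
  have h1 := hL ((i + n) % L.length) (Nat.mod_lt _ h0)
  rw [Nat.mod_add_mod] at h1
  have h2 : i + 1 + n = i + n + 1 := by omega
  rw [h2]
  exact h1

end NoPCC

namespace NoPCC

open SimpleGraph

lemma step_lemma (hc : 0 < c) {x p q : Vt c d}
    (hadj : (Gr c d).Adj p q)
    (hxp : x.val <+: p.val) (hlp : x.val.length < p.val.length)
    (hq : x.val.length ≤ q.val.length) (hqx : q ≠ x) :
    ∃ hlq : x.val.length < q.val.length, x.val <+: q.val ∧
      ∀ (hp' : x.val.length < p.val.length),
        q.val.get ⟨x.val.length, hlq⟩ = p.val.get ⟨x.val.length, hp'⟩ := by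
  rcases hadj.2 with hpq | hpq
  · have hlq : x.val.length < q.val.length := lt_of_lt_of_le hlp hpq.length_le
    refine ⟨hlq, hxp.trans hpq, ?_⟩
    intro hp'
    simp only [List.get_eq_getElem]
    exact (hpq.getElem hp').symm
  · have hxq : x.val <+: q.val := List.prefix_of_prefix_length_le hxp hpq hq
    have hlq : x.val.length < q.val.length := by
      rcases lt_or_eq_of_le hq with h | h
      · exact h
      · exact absurd (Subtype.ext (hxq.eq_of_length h)).symm hqx
    refine ⟨hlq, hxq, ?_⟩
    intro hp'
    simp only [List.get_eq_getElem]
    exact hpq.getElem hlq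

theorem no_pcc (hc : 0 < c) (hd : 1 ≤ d) :
    ¬ HasProperlyColoredCycle (Gr c d) (col c d hc) := by
  letI : Inhabited (Vt c d) := ⟨⟨[], by simp⟩⟩
  letI : Inhabited (Sym2 (Vt c d)) := ⟨s(default, default)⟩
  rintro ⟨v, w, hcyc, hpc⟩
  have hsupne : w.support.toFinset.Nonempty :=
    ⟨v, by simp [Walk.start_mem_support]⟩
  obtain ⟨x, hxmem', hxmin'⟩ :=
    Finset.exists_min_image w.support.toFinset (fun z => z.val.length) hsupne
  have hxmem : x ∈ w.support := by simpa using hxmem'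
  have hxmin : ∀ u ∈ w.support, x.val.length ≤ u.val.length :=
    fun u hu => hxmin' u (by simpa using hu)
  set w' := w.rotate x hxmem with hw'
  have hcyc' : w'.IsCycle := hcyc.rotate hxmem
  set n := w'.length with hn
  have hn3 : 3 ≤ n := hcyc'.three_le_length
  have hmin' : ∀ u ∈ w'.support, x.val.length ≤ u.val.length := by
    intro u hu
    rcases (Walk.mem_support_iff w').1 hu with rfl | hu'
    · exact le_rfl
    · exact hxmin u (List.mem_of_mem_tail
        ((Walk.support_rotate w x hxmem).perm.mem_iff.mp hu'))
  have hlenw : w.edges.length = w.length := w.length_edges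
  have hpcD : ∀ i, i < w.edges.length →
      col c d hc (w.edges.getD i default) ≠
        col c d hc (w.edges.getD ((i + 1) % w.edges.length) default) := by
    intro i hi
    have h2 := hpc ⟨i, hi⟩
    rw [List.getD_eq_getElem _ _ hi, List.getD_eq_getElem _ _ (Nat.mod_lt _ (by omega))]
    simpa [List.get_eq_getElem] using h2
  obtain ⟨m, hm⟩ := (w.rotate_edges x hxmem).symm
  have hpcD' : ∀ i, i < w'.edges.length →
      col c d hc (w'.edges.getD i default) ≠
        col c d hc (w'.edges.getD ((i + 1) % w'.edges.length) default) := by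
    rw [← hm]
    exact pc_rot _ _ m hpcD
  have hlen' : w'.edges.length = n := w'.length_edges
  have hmem_getVert : ∀ t, t ≤ n → w'.getVert t ∈ w'.support := by
    intro t ht
    have hlt : t < w'.support.length := by rw [Walk.length_support]; omega
    rw [← support_getElem w' t hlt]
    exact List.getElem_mem _
  have hgetx : w'.getVert n = x := Walk.getVert_length w'
  have hgetx0 : w'.getVert 0 = x := Walk.getVert_zero w'
  have htail := hcyc'.support_nodup
  have htaillen : w'.support.tail.length = n := by
    rw [List.length_tail, Walk.length_support]
    omega
  have hne : ∀ t, 1 ≤ t → t ≤ n - 1 → w'.getVert t ≠ x := by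
    intro t h1 h2 heq
    have hlt1 : t - 1 < w'.support.tail.length := by omega
    have hlt2 : n - 1 < w'.support.tail.length := by omega
    have e1 : w'.support.tail[t - 1]'hlt1 = w'.getVert t := by
      rw [List.getElem_tail, support_getElem]
      congr 1
      omega
    have e2 : w'.support.tail[n - 1]'hlt2 = w'.getVert n := by
      rw [List.getElem_tail, support_getElem]
      congr 1
      omega
    have e3 : w'.support.tail[t - 1]'hlt1 = w'.support.tail[n - 1]'hlt2 := by
      rw [e1, e2, hgetx, heq]
    have := (htail.getElem_inj_iff).1 e3
    omega
  have hadj01 : (Gr c d).Adj x (w'.getVert 1) := by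
    have := w'.adj_getVert_succ (by omega : 0 < w'.length)
    rwa [hgetx0] at this
  have hbase : ∃ h1 : x.val.length < (w'.getVert 1).val.length,
      x.val <+: (w'.getVert 1).val := by
    rcases hadj01.2 with hp | hp
    · have hne1 : x.val ≠ (w'.getVert 1).val := fun h => hadj01.1 (Subtype.ext h)
      exact ⟨lt_of_le_of_ne hp.length_le
        (fun h => hne1 (hp.eq_of_length h)), hp⟩
    · exfalso
      have h1 := hmin' _ (hmem_getVert 1 (by omega))
      have h2 := hp.length_le
      have h3 : (w'.getVert 1).val = x.val := hp.eq_of_length (by omega)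
      exact hadj01.1 (Subtype.ext h3.symm)
  obtain ⟨h1len, h1pre⟩ := hbase
  have key : ∀ t, 1 ≤ t → t ≤ n - 1 →
      ∃ hl : x.val.length < (w'.getVert t).val.length,
        x.val <+: (w'.getVert t).val ∧
        (w'.getVert t).val.get ⟨x.val.length, hl⟩ =
          (w'.getVert 1).val.get ⟨x.val.length, h1len⟩ := by
    intro t
    induction t with
    | zero => omega
    | succ s ih =>
      intro h1 h2
      by_cases hs : s = 0
      · subst hs
        exact ⟨h1len, h1pre, rfl⟩
      · obtain ⟨hl, hpre, hget⟩ := ih (by omega) (by omega)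
        have hadj : (Gr c d).Adj (w'.getVert s) (w'.getVert (s + 1)) :=
          w'.adj_getVert_succ (by omega)
        have hqmem := hmin' _ (hmem_getVert (s + 1) (by omega))
        have hqx := hne (s + 1) (by omega) h2
        obtain ⟨hlq, hxq, hgq⟩ := step_lemma hc hadj hpre hl hqmem hqx
        exact ⟨hlq, hxq, by rw [hgq hl, hget]⟩
  obtain ⟨hlast, _, hgetlast⟩ := key (n - 1) (by omega) le_rfl
  have he0 : w'.edges.getD 0 default = s(x, w'.getVert 1) := by
    rw [List.getD_eq_getElem _ _ (by omega), edges_getElem w' 0 (by omega), hgetx0]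
  have hen : w'.edges.getD (n - 1) default = s(w'.getVert (n - 1), x) := by
    rw [List.getD_eq_getElem _ _ (by omega), edges_getElem w' (n - 1) (by omega)]
    have h4 : n - 1 + 1 = n := by omega
    rw [h4, hgetx]
  have hceq : col c d hc (w'.edges.getD (n - 1) default) =
      col c d hc (w'.edges.getD 0 default) := by
    rw [he0, hen, col_mk, col_mk]
    unfold colFun
    rw [dif_neg (by omega), dif_pos hlast, dif_pos h1len]
    exact hgetlast
  have hfin := hpcD' (n - 1) (by omega)
  rw [hlen'] at hfin
  have hmodeq : (n - 1 + 1) % n = 0 := by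
    have h4 : n - 1 + 1 = n := by omega
    rw [h4, Nat.mod_self]
  rw [hmodeq] at hfin
  exact hfin hceq

end NoPCC


open NoPCC

/-- For every `c ≥ 2` and `d ≥ 1` there is a `c`-edge-colored graph `G` with
`δ_mon(G) = d` and with no properly colored cycle. -/
theorem exists_no_properly_colored_cycle (c d : ℕ) (hc : 2 ≤ c) (hd : 1 ≤ d) :
    ∃ (V : Type) (_ : Fintype V) (G : SimpleGraph V) (χ : Sym2 V → Fin c),
      minMonDeg G χ = d ∧ ¬ HasProperlyColoredCycle G χ := by
  have hc0 : 0 < c := by omega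
  refine ⟨Vt c d, inferInstance, Gr c d, col c d hc0, ?_, no_pcc hc0 hd⟩
  have hmem : d ∈ {k : ℕ | ∃ (x : Vt c d) (i : Fin c),
      monDeg (Gr c d) (col c d hc0) x i = k} :=
    ⟨leafVert c d, ⟨0, hc0⟩, card_leaf hc0 _ (fun j => count_leafList j) _⟩
  apply le_antisymm
  · exact Nat.sInf_le hmem
  · apply le_csInf ⟨d, hmem⟩
    rintro k ⟨x, i, rfl⟩
    exact d_le_card hc0 x i
end

section
/- For every integer c ≥ 2, every integer d ≥ 1, and every natural number N, there exists a c-edge-colored graph G on more than N vertices with δ_mon(G) = d that has no properly colored cycle; in particular, for each d ≥ 1 there are infinitely many (up to order) c-edge-colored graphs with minimum monochromatic degree d and no properly colored cycle. -/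
namespace NoPCCAux
open SimpleGraph


/-- nodup lists over `Fin c × Fin d` -/
abbrev L (c d : ℕ) : Type := {l : List (Fin c × Fin d) // l.Nodup}

noncomputable instance instFintypeL (c d : ℕ) : Fintype (L c d) := by
  classical
  apply Fintype.ofSurjective
    (f := fun p : (Σ k : Fin (c * d + 1), Fin k ↪ (Fin c × Fin d)) =>
      (⟨List.ofFn p.2, List.nodup_ofFn.mpr p.2.injective⟩ : L c d))
  rintro ⟨l, hl⟩
  have hle : l.length ≤ c * d := by
    have := hl.length_le_card
    simpa using this
  refine ⟨⟨⟨l.length, by omega⟩, ⟨l.get, List.nodup_iff_injective_get.mp hl⟩⟩, ?_⟩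
  simp [List.ofFn_get]

abbrev Vtx (c d N : ℕ) : Type := Fin (N + 1) × L c d

def Gr (c d N : ℕ) : SimpleGraph (Vtx c d N) where
  Adj x y := x ≠ y ∧ x.1 = y.1 ∧ (x.2.1 <+: y.2.1 ∨ y.2.1 <+: x.2.1)
  symm := by
    constructor
    rintro x y ⟨h1, h2, h3⟩
    exact ⟨h1.symm, h2.symm, h3.symm⟩
  loopless := by constructor; rintro x ⟨h, _⟩; exact h rfl

def col {c : ℕ} (hc : 0 < c) {d : ℕ} (l : List (Fin c × Fin d)) (t : ℕ) : Fin c :=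
  if h : t < l.length then (l[t]'h).1 else ⟨0, hc⟩

def chi (c d N : ℕ) (hc : 0 < c) : Sym2 (Vtx c d N) → Fin c :=
  Sym2.lift ⟨fun x y =>
    if x.2.1.length < y.2.1.length then col hc y.2.1 x.2.1.length
    else if y.2.1.length < x.2.1.length then col hc x.2.1 y.2.1.length
    else ⟨0, hc⟩, by
      intro x y
      dsimp only
      split_ifs <;> first | rfl | omega⟩

lemma chi_lt {c d N : ℕ} (hc : 0 < c) {x y : Vtx c d N}
    (h : x.2.1.length < y.2.1.length) :
    chi c d N hc s(x, y) = (y.2.1[x.2.1.length]'h).1 := by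
  show Sym2.lift _ s(x, y) = _
  rw [Sym2.lift_mk]
  dsimp only
  rw [if_pos h]
  unfold col
  rw [dif_pos h]




lemma edges_getElem {V : Type} {G : SimpleGraph V} {a b : V} (w : G.Walk a b) (i : ℕ)
    (h : i < w.edges.length) :
    w.edges[i]'h = s(w.getVert i, w.getVert (i + 1)) := by
  induction w generalizing i with
  | nil => simp at h
  | cons hadj p ih =>
    rcases i with _ | i
    · simp [Walk.edges_cons, Walk.getVert_zero, Walk.getVert_cons_succ]
    · simp only [Walk.edges_cons, List.getElem_cons_succ, Walk.getVert_cons_succ]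
      exact ih i (by simpa [Walk.edges_cons] using h)

lemma support_getElem {V : Type} {G : SimpleGraph V} {a b : V} (w : G.Walk a b) (i : ℕ)
    (h : i < w.support.length) :
    w.support[i]'h = w.getVert i := by
  induction w generalizing i with
  | nil =>
    rcases i with _ | i
    · rfl
    · simp at h
  | cons hadj p ih =>
    rcases i with _ | i
    · simp [Walk.support_cons, Walk.getVert_zero]
    · simp only [Walk.support_cons, List.getElem_cons_succ, Walk.getVert_cons_succ]
      exact ih i (by simpa [Walk.support_cons] using h)

lemma cycle_getVert_inj {V : Type} {G : SimpleGraph V} {v : V} {w : G.Walk v v}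
    (hcyc : w.IsCycle) {i j : ℕ} (hi : i < w.length) (hj : j < w.length)
    (hij : w.getVert i = w.getVert j) : i = j := by
  have hsuplen : w.support.length = w.length + 1 := w.length_support
  have htl : w.support.tail.length = w.length := by
    rw [List.length_tail, hsuplen]; omega
  have htget : ∀ a : ℕ, (ha : a < w.support.tail.length) →
      w.support.tail[a]'ha = w.getVert (a + 1) := by
    intro a ha
    rw [List.getElem_tail]
    exact support_getElem w (a + 1) (by omega)
  have key : ∀ a b : ℕ, 1 ≤ a → a ≤ w.length → 1 ≤ b → b ≤ w.length →
      w.getVert a = w.getVert b → a = b := by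
    intro a b ha1 ha2 hb1 hb2 hab
    have ha : a - 1 < w.support.tail.length := by omega
    have hb : b - 1 < w.support.tail.length := by omega
    have h1 : w.support.tail[a-1]'ha = w.support.tail[b-1]'hb := by
      rw [htget _ ha, htget _ hb]
      have e1 : a - 1 + 1 = a := by omega
      have e2 : b - 1 + 1 = b := by omega
      rw [e1, e2]; exact hab
    have := (hcyc.2.getElem_inj_iff).mp h1
    omega
  have hv0 : w.getVert 0 = w.getVert w.length := by
    rw [Walk.getVert_zero, Walk.getVert_length]
  rcases Nat.eq_zero_or_pos i with hi0 | hi1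
  · rcases Nat.eq_zero_or_pos j with hj0 | hj1
    · omega
    · subst hi0
      have : w.length = j := key w.length j (by omega) le_rfl hj1 (by omega)
        (by rw [← hv0]; exact hij)
      omega
  · rcases Nat.eq_zero_or_pos j with hj0 | hj1
    · subst hj0
      have : i = w.length := key i w.length hi1 (by omega) (by omega) le_rfl
        (by rw [hij, hv0])
      omega
    · exact key i j hi1 (by omega) hj1 (by omega) hij

section Main
variable {c d N : ℕ}

def HasPCC {V : Type} {c : ℕ} (G : SimpleGraph V) (χ : Sym2 V → Fin c) : Prop :=
  ∃ (v : V) (w : G.Walk v v), w.IsCycle ∧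
    ∀ i : Fin w.edges.length,
      χ (w.edges.get i) ≠
        χ (w.edges.get ⟨((i : ℕ) + 1) % w.edges.length, Nat.mod_lt _ i.pos⟩)

lemma noPCC (hc : 0 < c) : ¬ HasPCC (Gr c d N) (chi c d N hc) := by
  rintro ⟨v, w, hcyc, hPC⟩
  have hn3 : 3 ≤ w.length := hcyc.three_le_length
  obtain ⟨n, hn⟩ : ∃ n, n = w.length := ⟨_, rfl⟩
  rw [← hn] at hn3
  have hn0 : 0 < n := by omega
  obtain ⟨g, hg⟩ : ∃ g : ℕ → Vtx c d N, g = w.getVert := ⟨_, rfl⟩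
  have helen : w.edges.length = n := by rw [hn]; exact w.length_edges
  obtain ⟨P, hPdef⟩ : ∃ P : ℕ → Vtx c d N, P = fun s => g (s % n) := ⟨_, rfl⟩
  have hPapp : ∀ s, P s = g (s % n) := fun s => by rw [hPdef]
  have hPcyc : ∀ s, P (s + n) = P s := by
    intro s; rw [hPapp, hPapp, Nat.add_mod_right]
  have hmodsucc : ∀ s : ℕ, (s + 1) % n = (s % n + 1) % n := by
    intro s
    conv_lhs => rw [Nat.add_mod]
    rw [Nat.mod_eq_of_lt (show 1 < n by omega)]
  have hgsucc : ∀ s : ℕ, g (s % n + 1) = P (s + 1) := by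
    intro s
    rw [hPapp]
    by_cases h : s % n + 1 < n
    · rw [hmodsucc s, Nat.mod_eq_of_lt h]
    · have hsn : s % n < n := Nat.mod_lt _ hn0
      have he : s % n + 1 = n := by omega
      rw [he, hmodsucc s, he, Nat.mod_self, hg, hn, SimpleGraph.Walk.getVert_length,
        SimpleGraph.Walk.getVert_zero]
  have hPadj : ∀ s : ℕ, (Gr c d N).Adj (P s) (P (s + 1)) := by
    intro s
    have hlt : s % n < w.length := by rw [← hn]; exact Nat.mod_lt _ hn0
    have h1 := w.adj_getVert_succ hlt
    rw [← hg] at h1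
    rw [hgsucc s, ← hPapp s] at h1
    exact h1
  have hedge : ∀ a : ℕ, (h : a < w.edges.length) →
      w.edges[a]'h = s(g a, g (a + 1)) := by
    intro a h; rw [hg]; exact edges_getElem w a h
  have hPC' : ∀ s : ℕ,
      chi c d N hc s(P s, P (s + 1)) ≠ chi c d N hc s(P (s + 1), P (s + 2)) := by
    intro s
    have hmod : s % n < w.edges.length := by rw [helen]; exact Nat.mod_lt _ hn0
    have hkey := hPC ⟨s % n, hmod⟩
    simp only [List.get_eq_getElem] at hkey
    rw [hedge (s % n) hmod] at hkey
    have hmod2 : (s % n + 1) % w.edges.length < w.edges.length :=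
      Nat.mod_lt _ (by omega)
    have e2 : w.edges[(s % n + 1) % w.edges.length]'hmod2 =
        s(g ((s + 1) % n), g ((s + 1) % n + 1)) := by
      have h3 := hedge ((s + 1) % n) (by rw [helen]; exact Nat.mod_lt _ hn0)
      rw [← h3]
      congr 1
      rw [helen, hmodsucc s]
    rw [e2] at hkey
    rw [show g (s % n) = P s from (hPapp s).symm,
      show g ((s + 1) % n) = P (s + 1) from (hPapp (s + 1)).symm,
      hgsucc s, hgsucc (s + 1)] at hkey
    exact hkey
  -- minimal vertex on the cycle
  obtain ⟨t, ht, htmin⟩ : ∃ t, t < n ∧ ∀ s, s < n →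
      (g t).2.1.length ≤ (g s).2.1.length := by
    obtain ⟨t, htmem, htmin⟩ := Finset.exists_min_image (Finset.range n)
      (fun s => (g s).2.1.length) ⟨0, by simp [hn0]⟩
    exact ⟨t, by simpa using htmem, fun s hs => htmin s (by simpa using hs)⟩
  obtain ⟨m, hm⟩ : ∃ m : Vtx c d N, m = g t := ⟨_, rfl⟩
  have hPt : P t = m := by rw [hPapp, Nat.mod_eq_of_lt ht, hm]
  have hmin : ∀ s : ℕ, m.2.1.length ≤ (P s).2.1.length := by
    intro s; rw [hm, hPapp]; exact htmin _ (Nat.mod_lt _ hn0)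
  have hA : ∀ k, k ≤ n → m.1 = (P (t + k)).1 ∧ m.2.1 <+: (P (t + k)).2.1 := by
    intro k hk
    induction k with
    | zero =>
      have hz : P (t + 0) = m := by rw [Nat.add_zero]; exact hPt
      rw [hz]
      exact ⟨rfl, List.prefix_refl _⟩
    | succ k ih =>
      obtain ⟨ih1, ih2⟩ := ih (by omega)
      obtain ⟨hne, hfst, hor⟩ := hPadj (t + k)
      have hstep : t + (k + 1) = (t + k) + 1 := rfl
      rw [hstep]
      refine ⟨ih1.trans hfst, ?_⟩
      rcases hor with hp | hp
      · exact ih2.trans hp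
      · rcases List.prefix_or_prefix_of_prefix ih2 hp with h1 | h1
        · exact h1
        · have hlen : (P ((t + k) + 1)).2.1.length = m.2.1.length :=
            le_antisymm h1.length_le (hmin _)
          rw [← h1.eq_of_length hlen]
  have hB : ∀ k, 1 ≤ k → k ≤ n - 1 → P (t + k) ≠ m := by
    intro k h1 h2 heq
    have hlt1 : (t + k) % n < w.length := by rw [← hn]; exact Nat.mod_lt _ hn0
    have hlt2 : t < w.length := by rw [← hn]; exact ht
    have heq' : w.getVert ((t + k) % n) = w.getVert t := by
      rw [← hg]
      rw [hPapp, hm] at heq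
      exact heq
    have hinj := cycle_getVert_inj hcyc hlt1 hlt2 heq'
    have hq := Nat.mod_add_div (t + k) n
    rw [hinj] at hq
    have hk' : k = n * ((t + k) / n) := by omega
    rcases Nat.eq_zero_or_pos ((t + k) / n) with h0 | hpos
    · rw [h0, Nat.mul_zero] at hk'; omega
    · have hge : n ≤ n * ((t + k) / n) := Nat.le_mul_of_pos_right n hpos
      omega
  have hC : ∀ k, 1 ≤ k → k ≤ n - 1 → m.2.1.length < (P (t + k)).2.1.length := by
    intro k h1 h2
    obtain ⟨hfst, hpre⟩ := hA k (by omega)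
    rcases lt_or_eq_of_le hpre.length_le with h | h
    · exact h
    · exfalso
      apply hB k h1 h2
      have hval : m.2.1 = (P (t + k)).2.1 := hpre.eq_of_length h
      exact (Prod.ext hfst (Subtype.ext hval)).symm
  have hD : ∀ k, (h1 : 1 ≤ k) → (h2 : k ≤ n - 1) →
      (P (t + k)).2.1[m.2.1.length]'(hC k h1 h2) =
      (P (t + 1)).2.1[m.2.1.length]'(hC 1 le_rfl (by omega)) := by
    intro k h1 h2
    induction k with
    | zero => omega
    | succ k ih =>
      rcases Nat.eq_zero_or_pos k with h0 | hk1
      · subst h0; rfl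
      · have ihk := ih hk1 (by omega)
        obtain ⟨_, _, hor⟩ := hPadj (t + k)
        have e1 := hC k hk1 (by omega)
        have e2 : m.2.1.length < (P ((t + k) + 1)).2.1.length := hC (k + 1) (by omega) h2
        rcases hor with hp | hp
        · exact (hp.getElem e1).symm.trans ihk
        · exact (hp.getElem e2).trans ihk
  -- final contradiction
  have hcontra := hPC' (t + (n - 1))
  have e1 : P (t + (n - 1) + 1) = m := by
    rw [show t + (n - 1) + 1 = t + n from by omega, hPcyc, hPt]
  have e2 : P (t + (n - 1) + 2) = P (t + 1) := by
    rw [show t + (n - 1) + 2 = (t + 1) + n from by omega, hPcyc]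
  rw [e1, e2] at hcontra
  apply hcontra
  have hC1 := hC (n - 1) (by omega) le_rfl
  have hC2 := hC 1 le_rfl (by omega)
  have c1 : chi c d N hc s(P (t + (n - 1)), m) =
      ((P (t + (n - 1))).2.1[m.2.1.length]'hC1).1 := by
    rw [Sym2.eq_swap]
    exact chi_lt hc hC1
  have c2 : chi c d N hc s(m, P (t + 1)) =
      ((P (t + 1)).2.1[m.2.1.length]'hC2).1 := chi_lt hc hC2
  rw [c1, c2]
  exact congrArg Prod.fst (hD (n - 1) (by omega) le_rfl)

end Main
section Deg
variable {c d N : ℕ}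

lemma getElem_congr' {α : Type*} (l : List α) {j1 j2 : ℕ} (hj1 : j1 < l.length)
    (hj2 : j2 < l.length) (h : j1 = j2) : l[j1]'hj1 = l[j2]'hj2 := by subst h; rfl

lemma monDeg_ge (hc : 0 < c) (x : Vtx c d N) (i : Fin c) :
    d ≤ monDeg (Gr c d N) (chi c d N hc) x i := by
  obtain ⟨a, l, hl⟩ := x
  set lr : Fin d → List (Fin c × Fin d) := fun r =>
    if (i, r) ∈ l then l.take ((@List.idxOf _ instBEqProd (i, r) l)) else l ++ [(i, r)] with hlrdef
  have hnodup : ∀ r, (lr r).Nodup := by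
    intro r
    by_cases h : (i, r) ∈ l
    · simp only [hlrdef, if_pos h]
      exact hl.sublist (List.take_sublist _ _)
    · simp only [hlrdef, if_neg h]
      simp [List.nodup_append, hl, h]
      intro a b hab hai hbr; subst hai hbr; exact h hab
  have hmem : ∀ r : Fin d, (Gr c d N).Adj (a, ⟨l, hl⟩) (a, ⟨lr r, hnodup r⟩) ∧
      chi c d N hc s(((a, ⟨l, hl⟩) : Vtx c d N), (a, ⟨lr r, hnodup r⟩)) = i := by
    intro r
    by_cases h : (i, r) ∈ l
    · have hidx : (@List.idxOf _ instBEqProd (i, r) l) < l.length := List.idxOf_lt_length_iff.mpr h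
      have hlr : lr r = l.take ((@List.idxOf _ instBEqProd (i, r) l)) := if_pos h
      have hlenr : (lr r).length = (@List.idxOf _ instBEqProd (i, r) l) := by
        rw [hlr, List.length_take]; omega
      have hpre : lr r <+: l := by rw [hlr]; exact List.take_prefix _ _
      have hne : ((a, ⟨l, hl⟩) : Vtx c d N) ≠ (a, ⟨lr r, hnodup r⟩) := by
        intro hcontra
        have h2 : l = lr r := congrArg (fun z : Vtx c d N => z.2.1) hcontra
        rw [← h2] at hlenr
        omega
      refine ⟨⟨hne, rfl, Or.inr hpre⟩, ?_⟩
      have hlt : (lr r).length < l.length := by omega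
      rw [Sym2.eq_swap, chi_lt hc (x := ((a, ⟨lr r, hnodup r⟩) : Vtx c d N))
        (y := ((a, ⟨l, hl⟩) : Vtx c d N)) hlt]
      have key : l[(lr r).length]'hlt = l[(@List.idxOf _ instBEqProd (i, r) l)]'hidx :=
        getElem_congr' l hlt hidx hlenr
      rw [key, List.getElem_idxOf hidx]
    · have hlr : lr r = l ++ [(i, r)] := if_neg h
      have hlenr : (lr r).length = l.length + 1 := by rw [hlr]; simp
      have hpre : l <+: lr r := by rw [hlr]; exact List.prefix_append _ _
      have hne : ((a, ⟨l, hl⟩) : Vtx c d N) ≠ (a, ⟨lr r, hnodup r⟩) := by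
        intro hcontra
        have h2 : l = lr r := congrArg (fun z : Vtx c d N => z.2.1) hcontra
        rw [← h2] at hlenr
        omega
      refine ⟨⟨hne, rfl, Or.inl hpre⟩, ?_⟩
      have hlt : l.length < (lr r).length := by omega
      rw [chi_lt hc (x := ((a, ⟨l, hl⟩) : Vtx c d N)) hlt]
      have key : ∀ (L2 : List (Fin c × Fin d)) (hj : l.length < L2.length),
          L2 = l ++ [(i, r)] → (L2[l.length]'hj).1 = i := by
        intro L2 hj hje
        subst hje
        simp
      exact key _ hlt hlr
  have hinj : Function.Injective (fun r : Fin d => ((a, ⟨lr r, hnodup r⟩) : Vtx c d N)) := by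
    intro r r' he
    have hee : lr r = lr r' := congrArg (fun z : Vtx c d N => z.2.1) he
    by_cases h : (i, r) ∈ l <;> by_cases h' : (i, r') ∈ l
    · have hidx : (@List.idxOf _ instBEqProd (i, r) l) < l.length := List.idxOf_lt_length_iff.mpr h
      have hidx' : (@List.idxOf _ instBEqProd (i, r') l) < l.length := List.idxOf_lt_length_iff.mpr h'
      have hlen1 : (lr r).length = (@List.idxOf _ instBEqProd (i, r) l) := by
        have hlr : lr r = l.take ((@List.idxOf _ instBEqProd (i, r) l)) := if_pos h
        rw [hlr, List.length_take]; omega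
      have hlen2 : (lr r').length = (@List.idxOf _ instBEqProd (i, r') l) := by
        have hlr : lr r' = l.take ((@List.idxOf _ instBEqProd (i, r') l)) := if_pos h'
        rw [hlr, List.length_take]; omega
      have hje : (@List.idxOf _ instBEqProd (i, r) l) = (@List.idxOf _ instBEqProd (i, r') l) := by
        rw [← hlen1, ← hlen2, hee]
      have hpp : (i, r) = (i, r') := by
        rw [← List.getElem_idxOf hidx, ← List.getElem_idxOf hidx']
        exact getElem_congr' l hidx hidx' hje
      have := congrArg Prod.snd hpp
      exact Fin.ext (congrArg Fin.val this)
    · exfalso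
      have hlen1 : (lr r).length = (@List.idxOf _ instBEqProd (i, r) l) := by
        have hlr : lr r = l.take ((@List.idxOf _ instBEqProd (i, r) l)) := if_pos h
        have := List.idxOf_lt_length_iff.mpr h
        rw [hlr, List.length_take]; omega
      have hlen2 : (lr r').length = l.length + 1 := by
        have hlr : lr r' = l ++ [(i, r')] := if_neg h'
        rw [hlr]; simp
      have := List.idxOf_lt_length_iff.mpr h
      rw [hee, hlen2] at hlen1
      omega
    · exfalso
      have hlen1 : (lr r).length = l.length + 1 := by
        have hlr : lr r = l ++ [(i, r)] := if_neg h
        rw [hlr]; simp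
      have hlen2 : (lr r').length = (@List.idxOf _ instBEqProd (i, r') l) := by
        have hlr : lr r' = l.take ((@List.idxOf _ instBEqProd (i, r') l)) := if_pos h'
        have := List.idxOf_lt_length_iff.mpr h'
        rw [hlr, List.length_take]; omega
      have := List.idxOf_lt_length_iff.mpr h'
      rw [hee, hlen2] at hlen1
      omega
    · have e1 : lr r = l ++ [(i, r)] := if_neg h
      have e2 : lr r' = l ++ [(i, r')] := if_neg h'
      rw [e1, e2] at hee
      have := List.append_cancel_left hee
      simp at this
      exact Fin.ext (congrArg Fin.val this)
  show d ≤ Nat.card {y : Vtx c d N // (Gr c d N).Adj (a, ⟨l, hl⟩) y ∧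
      chi c d N hc s(((a, ⟨l, hl⟩) : Vtx c d N), y) = i}
  have hcard := Nat.card_le_card_of_injective
    (f := fun r : Fin d =>
      (⟨(a, ⟨lr r, hnodup r⟩), (hmem r).1, (hmem r).2⟩ :
        {y : Vtx c d N // (Gr c d N).Adj (a, ⟨l, hl⟩) y ∧
          chi c d N hc s(((a, ⟨l, hl⟩) : Vtx c d N), y) = i}))
    (fun r r' he => hinj (congrArg Subtype.val he))
  have hfd : Nat.card (Fin d) = d := Nat.card_eq_fintype_card.trans (Fintype.card_fin d)
  rw [hfd] at hcard
  exact hcard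

def lstar (c d : ℕ) : List (Fin c × Fin d) := (List.finRange c) ×ˢ (List.finRange d)

lemma lstar_nodup : (lstar c d).Nodup :=
  (List.nodup_finRange c).product (List.nodup_finRange d)

lemma mem_lstar (p : Fin c × Fin d) : p ∈ lstar c d := by
  obtain ⟨p1, p2⟩ := p
  exact List.mem_product.mpr ⟨List.mem_finRange _, List.mem_finRange _⟩

def xstar (c d N : ℕ) : Vtx c d N := (0, ⟨lstar c d, lstar_nodup⟩)

lemma monDeg_leaf (hc : 0 < c) (hd : 0 < d) (i : Fin c) :
    monDeg (Gr c d N) (chi c d N hc) (xstar c d N) i = d := by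
  classical
  refine le_antisymm ?_ (monDeg_ge hc _ i)
  have hchar : ∀ y : Vtx c d N, (Gr c d N).Adj (xstar c d N) y →
      y.2.1 <+: lstar c d ∧ y.2.1.length < (lstar c d).length ∧ y.1 = 0 := by
    rintro y ⟨hne, hfst, hor⟩
    have hlne : y.2.1 ≠ lstar c d := by
      intro hcontra
      apply hne
      exact (Prod.ext hfst (Subtype.ext hcontra.symm))
    have hpre : y.2.1 <+: lstar c d := by
      rcases hor with hp | hp
      · exfalso
        obtain ⟨u, hu⟩ := hp
        rcases u with _ | ⟨e, u'⟩
        · rw [List.append_nil] at hu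
          exact hlne hu.symm
        · have hu' : lstar c d ++ e :: u' = y.2.1 := hu
          have hnd : (lstar c d ++ e :: u').Nodup := by rw [hu']; exact y.2.2
          exact List.disjoint_of_nodup_append hnd (mem_lstar e) List.mem_cons_self
      · exact hp
    refine ⟨hpre, ?_, hfst.symm⟩
    rcases lt_or_eq_of_le hpre.length_le with h | h
    · exact h
    · exact absurd (hpre.eq_of_length h) hlne
  set S := {y : Vtx c d N // (Gr c d N).Adj (xstar c d N) y ∧
      chi c d N hc s(xstar c d N, y) = i} with hS
  set φ : S → Fin d := fun z =>
    if h : z.1.2.1.length < (lstar c d).length then ((lstar c d)[z.1.2.1.length]'h).2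
    else ⟨0, hd⟩ with hφ
  have hentry : ∀ z : S, (h : z.1.2.1.length < (lstar c d).length) →
      ((lstar c d)[z.1.2.1.length]'h).1 = i := by
    rintro ⟨y, hadj, hchi⟩ h
    have hlt : y.2.1.length < (xstar c d N).2.1.length := h
    rw [Sym2.eq_swap, chi_lt hc (x := y) (y := xstar c d N) hlt] at hchi
    exact hchi
  have hinj : Function.Injective φ := by
    rintro z z' he
    obtain ⟨hpre, hlt, hfst⟩ := hchar z.1 z.2.1
    obtain ⟨hpre', hlt', hfst'⟩ := hchar z'.1 z'.2.1
    rw [hφ] at he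
    simp only [dif_pos hlt, dif_pos hlt'] at he
    have hpair : (lstar c d)[z.1.2.1.length]'hlt = (lstar c d)[z'.1.2.1.length]'hlt' :=
      Prod.ext (by rw [hentry z hlt, hentry z' hlt']) he
    have hlen : z.1.2.1.length = z'.1.2.1.length :=
      (lstar_nodup.getElem_inj_iff).mp hpair
    have hval : z.1.2.1 = z'.1.2.1 :=
      (List.prefix_of_prefix_length_le hpre hpre' (le_of_eq hlen)).eq_of_length hlen
    apply Subtype.ext
    exact Prod.ext (hfst.trans hfst'.symm) (Subtype.ext hval)
  have hcard := Nat.card_le_card_of_injective φ hinj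
  have hfd : Nat.card (Fin d) = d := Nat.card_eq_fintype_card.trans (Fintype.card_fin d)
  rw [hfd] at hcard
  exact hcard

end Deg
end NoPCCAux

/-- For every `c ≥ 2`, `d ≥ 1` and every `N`, there is a `c`-edge-colored graph
on more than `N` vertices with `δ_mon(G) = d` and no properly colored cycle;
hence there are infinitely many such graphs (up to order). -/
theorem exists_no_properly_colored_cycle_large_order
    (c d N : ℕ) (hc : 2 ≤ c) (hd : 1 ≤ d) :
    ∃ (V : Type) (_ : Fintype V) (G : SimpleGraph V) (χ : Sym2 V → Fin c),
      N < Nat.card V ∧ minMonDeg G χ = d ∧ ¬ HasProperlyColoredCycle G χ := by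
  have hc0 : 0 < c := by omega
  have hd0 : 0 < d := hd
  refine ⟨NoPCCAux.Vtx c d N, inferInstance, NoPCCAux.Gr c d N, NoPCCAux.chi c d N hc0,
    ?_, ?_, NoPCCAux.noPCC hc0⟩
  · have hinj : Function.Injective
        (fun r : Fin (N + 1) => ((r, ⟨[], List.nodup_nil⟩) : NoPCCAux.Vtx c d N)) := by
      intro r r' h
      exact congrArg Prod.fst h
    have hcard := Nat.card_le_card_of_injective _ hinj
    have hfd : Nat.card (Fin (N + 1)) = N + 1 :=
      Nat.card_eq_fintype_card.trans (Fintype.card_fin _)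
    have hrfl : Nat.card (NoPCCAux.Vtx c d N) =
        Nat.card (Fin (N + 1) × NoPCCAux.L c d) := rfl
    omega
  · apply le_antisymm
    · exact Nat.sInf_le ⟨NoPCCAux.xstar c d N, ⟨0, hc0⟩,
        NoPCCAux.monDeg_leaf hc0 hd0 ⟨0, hc0⟩⟩
    · refine le_csInf ⟨d, NoPCCAux.xstar c d N, ⟨0, hc0⟩,
        NoPCCAux.monDeg_leaf hc0 hd0 ⟨0, hc0⟩⟩ ?_
      rintro k ⟨x, i, rfl⟩
      exact NoPCCAux.monDeg_ge hc0 x i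
end

section
/- Let c ≥ 2 be an integer and let p_1, p_2, …, p_c be nonnegative integers with s = p_1 + p_2 + ⋯ + p_c > 0. Then there exists a c-edge-colored graph G with no properly colored cycle such that δ_mon(G) = min { p_i : i = 1, …, c } and the number of vertices of G is at most s·c^s. -/
namespace PCCAux

variable {c : ℕ}

/-- The vertex type: lists over `Fin c` whose letter counts are bounded by `p`. -/
def GV (c : ℕ) (p : Fin c → ℕ) : Type := {l : List (Fin c) // ∀ j, l.count j ≤ p j}

instance (c : ℕ) (p : Fin c → ℕ) : DecidableEq (GV c p) := by
  unfold GV; infer_instance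

/-- The graph: adjacency is strict prefix-comparability. -/
def GG (c : ℕ) (p : Fin c → ℕ) : SimpleGraph (GV c p) where
  Adj u v := (u.1 <+: v.1 ∨ v.1 <+: u.1) ∧ u ≠ v
  symm := ⟨by rintro u v ⟨h | h, hne⟩ <;> exact ⟨by tauto, hne.symm⟩⟩
  loopless := ⟨by rintro u ⟨_, hne⟩; exact hne rfl⟩

def colorFun (hc : 0 < c) (a b : List (Fin c)) : Fin c :=
  if a.length < b.length then b.getD a.length ⟨0, hc⟩ else a.getD b.length ⟨0, hc⟩

lemma colorFun_comm (hc : 0 < c) (a b : List (Fin c)) :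
    colorFun hc a b = colorFun hc b a := by
  unfold colorFun
  rcases lt_trichotomy a.length b.length with h | h | h
  · rw [if_pos h, if_neg (by omega)]
  · rw [if_neg (by omega), if_neg (by omega),
      List.getD_eq_default _ _ (by omega), List.getD_eq_default _ _ (by omega)]
  · rw [if_neg (by omega), if_pos h]

/-- The coloring. -/
def chi (hc : 0 < c) (p : Fin c → ℕ) : Sym2 (GV c p) → Fin c :=
  Sym2.lift ⟨fun u v => colorFun hc u.1 v.1, fun u v => colorFun_comm hc u.1 v.1⟩

lemma chi_mk (hc : 0 < c) (p : Fin c → ℕ) (u v : GV c p) :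
    chi hc p s(u, v) = colorFun hc u.1 v.1 := rfl

lemma chi_of_lt (hc : 0 < c) (p : Fin c → ℕ) {u v : GV c p}
    (h : u.1.length < v.1.length) :
    chi hc p s(u, v) = v.1.getD u.1.length ⟨0, hc⟩ := by
  rw [chi_mk, colorFun, if_pos h]

lemma chi_of_lt' (hc : 0 < c) (p : Fin c → ℕ) {u v : GV c p}
    (h : v.1.length < u.1.length) :
    chi hc p s(u, v) = u.1.getD v.1.length ⟨0, hc⟩ := by
  rw [Sym2.eq_swap, chi_of_lt hc p h]

/-- From adjacency plus a length inequality, the shorter is a strict prefix. -/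
lemma adj_strict_prefix {p : Fin c → ℕ} {u v : GV c p} (h : (GG c p).Adj u v)
    (hlen : u.1.length ≤ v.1.length) : u.1 <+: v.1 ∧ u.1.length < v.1.length := by
  obtain ⟨hp | hp, hne⟩ := h
  · refine ⟨hp, lt_of_le_of_ne hp.length_le ?_⟩
    intro hEq
    exact hne (Subtype.ext (hp.eq_of_length_le hEq.ge))
  · exact (hne (Subtype.ext (hp.eq_of_length_le hlen)).symm).elim

lemma length_le_sum {p : Fin c → ℕ} (u : GV c p) : u.1.length ≤ ∑ j, p j := by
  have h1 : u.1.length = ∑ j, u.1.count j := by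
    classical
    have := Multiset.sum_count_eq_card (s := (Finset.univ : Finset (Fin c)))
      (m := (↑u.1 : Multiset (Fin c))) (fun a _ => Finset.mem_univ a)
    simpa using this.symm
  rw [h1]
  exact Finset.sum_le_sum fun j _ => u.2 j

noncomputable instance fintypeGV (c : ℕ) (p : Fin c → ℕ) : Fintype (GV c p) := by
  classical
  exact Fintype.ofInjective
    (fun u : GV c p => (fun k : Fin (∑ j, p j) => u.1[(k : ℕ)]? : Fin (∑ j, p j) → Option (Fin c)))
    (by
      intro u v h
      apply Subtype.ext
      apply List.ext_getElem?
      intro k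
      by_cases hk : k < ∑ j, p j
      · exact congrFun h ⟨k, hk⟩
      · rw [List.getElem?_eq_none (by have := length_le_sum u; omega),
          List.getElem?_eq_none (by have := length_le_sum v; omega)])

end PCCAux
namespace PCCAux

variable {c : ℕ}

open SimpleGraph

lemma get_eq_of_getElem? {α : Type*} {l : List α} {m : ℕ} {a : α}
    (h : l[m]? = some a) (hm : m < l.length) : l.get ⟨m, hm⟩ = a := by
  rw [List.get_eq_getElem]
  rw [List.getElem?_eq_getElem hm] at h
  exact Option.some.inj h

lemma getD_eq_of_prefix {α : Type*} {l₁ l₂ : List α} (h : l₁ <+: l₂) {n : ℕ}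
    (hn : n < l₁.length) (d : α) : l₁.getD n d = l₂.getD n d := by
  rw [List.getD_eq_getElem l₁ d hn, List.getD_eq_getElem l₂ d (hn.trans_le h.length_le)]
  exact h.getElem hn

/-- Along a walk avoiding `u`, never shorter than `u`, starting at an
extension of `u`: every vertex extends `u` and the letter at position
`u.length` is constant. -/
lemma walk_entry_eq (hc : 0 < c) (p : Fin c → ℕ) {u : GV c p} :
    ∀ {a b : GV c p} (W : (GG c p).Walk a b),
      (∀ x ∈ W.support, u.1.length ≤ x.1.length ∧ x ≠ u) →
      u.1 <+: a.1 →
      u.1 <+: b.1 ∧ a.1.getD u.1.length ⟨0, hc⟩ = b.1.getD u.1.length ⟨0, hc⟩ := by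
  intro a b W
  induction W with
  | nil => exact fun _ h => ⟨h, rfl⟩
  | @cons a a' b h W ih =>
    intro hsup hpre
    have ha_ne : a ≠ u := (hsup a (by simp)).2
    have ha_lt : u.1.length < a.1.length := by
      refine lt_of_le_of_ne hpre.length_le fun hEq => ha_ne ?_
      exact (Subtype.ext (hpre.eq_of_length_le hEq.ge)).symm
    have ha' := hsup a' (by simp)
    have key : u.1 <+: a'.1 ∧
        a.1.getD u.1.length ⟨0, hc⟩ = a'.1.getD u.1.length ⟨0, hc⟩ := by
      obtain ⟨hcomp, hnea⟩ := h
      rcases hcomp with hp | hp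
      · exact ⟨hpre.trans hp, getD_eq_of_prefix hp ha_lt _⟩
      · have hua' : u.1 <+: a'.1 := List.prefix_of_prefix_length_le hpre hp ha'.1
        have hlt' : u.1.length < a'.1.length := by
          refine lt_of_le_of_ne hua'.length_le fun hEq => ha'.2 ?_
          exact (Subtype.ext (hua'.eq_of_length_le hEq.ge)).symm
        exact ⟨hua', (getD_eq_of_prefix hp hlt' _).symm⟩
    obtain ⟨r1, r2⟩ := ih (fun x hx => hsup x (by simp [hx])) key.1
    exact ⟨r1, key.2.trans r2⟩

lemma no_pcc (hc : 0 < c) (p : Fin c → ℕ) :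
    ¬ HasProperlyColoredCycle (GG c p) (chi hc p) := by
  classical
  rintro ⟨v, w, hcyc, hprop⟩
  obtain ⟨u, hu_mem', hu_min'⟩ := Finset.exists_min_image w.support.toFinset
    (fun x : GV c p => x.1.length) ⟨v, List.mem_toFinset.mpr w.start_mem_support⟩
  have hu_mem : u ∈ w.support := List.mem_toFinset.mp hu_mem'
  have hu_min : ∀ x ∈ w.support, u.1.length ≤ x.1.length :=
    fun x hx => hu_min' x (List.mem_toFinset.mpr hx)
  set w' := w.rotate u hu_mem with hw'def
  have hcyc' : w'.IsCycle := hcyc.rotate hu_mem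
  have hsup' : ∀ x ∈ w'.support, u.1.length ≤ x.1.length := by
    intro x hx
    rw [w'.support_eq_cons] at hx
    rcases List.mem_cons.mp hx with rfl | hx
    · exact le_refl _
    · have : x ∈ w.support.tail := ((Walk.support_rotate w u hu_mem).mem_iff).mp hx
      exact hu_min x (w.support_eq_cons ▸ List.mem_cons_of_mem _ this)
  -- decompose w' = cons h₁ W₀  with  W₀ : Walk v₁ u
  obtain ⟨v₁, h₁, W₀, hw1⟩ := Walk.not_nil_iff.mp hcyc'.not_nil
  have hv₁u : v₁ ≠ u := fun h => (GG c p).irrefl (h ▸ h₁)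
  -- decompose W₀.reverse = cons h₂ W₁  with  W₁ : Walk v₂ v₁
  obtain ⟨v₂, h₂, W₁, hw2⟩ := Walk.not_nil_iff.mp
    (Walk.not_nil_of_ne (p := W₀.reverse) hv₁u.symm)
  -- structure of supports
  have hW₀sup : W₀.support = w'.support.tail := by
    rw [hw1, Walk.support_cons, List.tail_cons]
  have hnd : W₀.support.Nodup := hW₀sup ▸ hcyc'.support_nodup
  have hne0 : W₀.support ≠ [] := Walk.support_ne_nil _
  have hsplit : W₀.support.dropLast ++ [u] = W₀.support := by
    have h0 := List.dropLast_append_getLast hne0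
    have hgl : W₀.support.getLast hne0 = u := W₀.getLast_support
    rwa [hgl] at h0
  have huD : u ∉ W₀.support.dropLast := by
    intro hu
    rw [← hsplit] at hnd
    exact (List.nodup_append.mp hnd).2.2 u hu u (by simp) rfl
  have hW₁sup : W₁.support = W₀.support.dropLast.reverse := by
    have h1 : u :: W₁.support = W₀.support.reverse := by
      rw [← Walk.support_reverse, hw2, Walk.support_cons]
    have h2 : W₀.support.reverse = u :: W₀.support.dropLast.reverse := by
      rw [← hsplit]; simp
    rw [h2] at h1
    exact (List.cons_injective.eq_iff.mp h1)
  have hW₁cond : ∀ x ∈ W₁.support, u.1.length ≤ x.1.length ∧ x ≠ u := by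
    intro x hx
    rw [hW₁sup, List.mem_reverse] at hx
    refine ⟨?_, fun h => huD (h ▸ hx)⟩
    have hx' : x ∈ W₀.support := List.dropLast_subset _ hx
    exact hsup' x (by rw [hw1, Walk.support_cons]; exact List.mem_cons_of_mem _ hx')
  -- v₁ and v₂ are strict extensions of u
  have hv₁mem : v₁ ∈ w'.support := by
    rw [hw1, Walk.support_cons]; exact List.mem_cons_of_mem _ W₀.start_mem_support
  have hv₂cond := hW₁cond v₂ W₁.start_mem_support
  have hP₁ := adj_strict_prefix h₁ (hsup' v₁ hv₁mem)
  have hP₂ := adj_strict_prefix h₂ hv₂cond.1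
  -- the two neighbors of u carry the same letter at position u.length
  have hEnt := walk_entry_eq hc p W₁ hW₁cond hP₂.1
  -- edges of w' as a concrete list
  have hedges : w'.edges = s(u, v₁) :: W₀.edges := by rw [hw1, Walk.edges_cons]
  have hW₀rev : W₀.edges.reverse = s(u, v₂) :: W₁.edges := by
    rw [← Walk.edges_reverse, hw2, Walk.edges_cons]
  have hW₀eq : W₀.edges = W₁.edges.reverse ++ [s(u, v₂)] := by
    have h3 : W₀.edges.reverse.reverse = (s(u, v₂) :: W₁.edges).reverse := by rw [hW₀rev]
    simpa using h3
  have hconc : w'.edges = (s(u, v₁) :: W₁.edges.reverse) ++ [s(u, v₂)] := by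
    rw [hedges, hW₀eq]; simp
  set N' := w'.edges.length with hN'def
  have hN' : N' = W₁.edges.length + 2 := by rw [hN'def, hconc]; simp
  -- the colors of the first and last edges of w' agree
  have hcolor : chi hc p (s(u, v₁)) = chi hc p (s(u, v₂)) := by
    rw [chi_of_lt hc p hP₁.2, chi_of_lt hc p hP₂.2]
    exact hEnt.2.symm
  -- getElem? computations
  have hlast? : w'.edges[N' - 1]? = some s(u, v₂) := by
    rw [hconc, hN']
    rw [List.getElem?_append_right (by simp)]
    simp
  have hfirst? : w'.edges[0]? = some s(u, v₁) := by
    rw [hedges]; simp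
  -- rotation index bookkeeping
  obtain ⟨n₀, hn₀⟩ := w.rotate_edges u hu_mem
  set n := n₀ % N' with hndef
  have hn : w'.edges.rotate n = w.edges := by
    rw [hndef, hN'def, List.rotate_mod]; exact hn₀
  have hN'pos : 0 < N' := by omega
  have hnN : n < N' := Nat.mod_lt _ hN'pos
  have hNN : w.edges.length = N' := by rw [← hn, List.length_rotate]
  set k₁ := N' - 1 - n with hk₁
  have hk₁lt : k₁ < w.edges.length := by omega
  have E1 : w.edges[k₁]? = some s(u, v₂) := by
    rw [← hn, List.getElem?_rotate (by omega : k₁ < w'.edges.length)]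
    have : (k₁ + n) % w'.edges.length = N' - 1 := by
      rw [← hN'def, Nat.mod_eq_of_lt (by omega)]; omega
    rw [this, hlast?]
  have E2 : w.edges[(k₁ + 1) % w.edges.length]? = some s(u, v₁) := by
    rw [← hn, List.getElem?_rotate (by rw [List.length_rotate]; exact Nat.mod_lt _ (by omega) : (k₁ + 1) % (w'.edges.rotate n).length < w'.edges.length)]
    have : ((k₁ + 1) % (w'.edges.rotate n).length + n) % w'.edges.length = 0 := by
      rw [List.length_rotate, ← hN'def, Nat.mod_add_mod]
      have h5 : k₁ + 1 + n = N' := by omega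
      rw [h5, Nat.mod_self]
    rw [this, hfirst?]
  have key := hprop ⟨k₁, hk₁lt⟩
  apply key
  have hmlt : (k₁ + 1) % w.edges.length < w.edges.length := Nat.mod_lt _ (by omega)
  exact (congrArg _ (get_eq_of_getElem? E1 hk₁lt)).trans
    (hcolor.symm.trans (congrArg _ (get_eq_of_getElem? E2 hmlt)).symm)

end PCCAux

namespace PCCAux

variable {c : ℕ}

open SimpleGraph

lemma length_eq_sum_count (l : List (Fin c)) : l.length = ∑ j, l.count j := by
  classical
  have := Multiset.sum_count_eq_card (s := (Finset.univ : Finset (Fin c)))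
    (m := (↑l : Multiset (Fin c))) (fun a _ => Finset.mem_univ a)
  simpa using this.symm

/-- The number of positions of `l` holding the letter `i` is `l.count i`. -/
lemma card_filter_range_getD (d : Fin c) (l : List (Fin c)) (i : Fin c) :
    ((Finset.range l.length).filter fun k => l.getD k d = i).card = l.count i := by
  classical
  induction l using List.reverseRecOn with
  | nil => simp
  | append_singleton t a ih =>
    rw [List.length_append, List.length_singleton, Finset.range_add_one, Finset.filter_insert]
    have hcong : ((Finset.range t.length).filter fun k => (t ++ [a]).getD k d = i)
        = ((Finset.range t.length).filter fun k => t.getD k d = i) := by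
      apply Finset.filter_congr
      intro k hk
      rw [List.getD_append _ _ _ _ (Finset.mem_range.mp hk)]
    have hn : (t ++ [a]).getD t.length d = a := by
      rw [List.getD_append_right _ _ _ _ (le_refl _), Nat.sub_self]
      rfl
    rw [List.count_append]
    by_cases ha : a = i
    · rw [if_pos (by rw [hn, ha]), Finset.card_insert_of_notMem
        (fun hmem => by simpa using Finset.mem_range.mp (Finset.mem_filter.mp hmem).1),
        hcong, ih]
      simp [ha]
    · rw [if_neg (by rw [hn]; exact ha), hcong, ih]
      simp [List.count_singleton, ha]

/-- The auxiliary neighbor-producing function. -/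
noncomputable def nbr (hc : 0 < c) (p : Fin c → ℕ) (x : GV c p) (i : Fin c) (k : ℕ) :
    GV c p :=
  if hkl : k < x.1.length then
    ⟨x.1.take k, fun j => le_trans ((List.take_sublist k x.1).count_le j) (x.2 j)⟩
  else
    ⟨x.1 ++ List.replicate (min (k - x.1.length + 1) (p i - x.1.count i)) i, by
      intro j
      rw [List.count_append, List.count_replicate]
      by_cases hj : i = j
      · subst hj
        simp only [beq_self_eq_true, if_true]
        have h1 : min (k - x.1.length + 1) (p i - x.1.count i) ≤ p i - x.1.count i :=
          min_le_right _ _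
        have h2 := x.2 i
        omega
      · rw [if_neg (by simpa using hj)]
        simpa using x.2 j⟩

lemma nbr_val (hc : 0 < c) (p : Fin c → ℕ) (x : GV c p) (i : Fin c) (k : ℕ) :
    (nbr hc p x i k).1 = if k < x.1.length then x.1.take k
      else x.1 ++ List.replicate (min (k - x.1.length + 1) (p i - x.1.count i)) i := by
  by_cases h : k < x.1.length
  · rw [if_pos h]; unfold nbr; exact congrArg Subtype.val (dif_pos h)
  · rw [if_neg h]; unfold nbr; exact congrArg Subtype.val (dif_neg h)

lemma monDeg_ge (hc : 0 < c) (p : Fin c → ℕ) (x : GV c p) (i : Fin c) :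
    p i ≤ monDeg (GG c p) (chi hc p) x i := by
  classical
  have hqp : x.1.count i ≤ p i := x.2 i
  set A : Finset ℕ := (Finset.range x.1.length).filter
    (fun k => x.1.getD k ⟨0, hc⟩ = i) with hA
  set B : Finset ℕ := Finset.Ico x.1.length (x.1.length + (p i - x.1.count i)) with hB
  have hAB : Disjoint A B := by
    rw [Finset.disjoint_left]
    intro k hk hk'
    have h1 := Finset.mem_range.mp (Finset.mem_filter.mp hk).1
    have h2 := (Finset.mem_Ico.mp hk').1
    omega
  have hcard : (A ∪ B).card = p i := by
    rw [Finset.card_union_of_disjoint hAB, hA, card_filter_range_getD, hB, Nat.card_Ico]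
    omega
  -- length of produced neighbors
  have hlen : ∀ k ∈ A ∪ B, (nbr hc p x i k).1.length
      = (if k < x.1.length then k else k + 1) := by
    intro k hk
    rcases Finset.mem_union.mp hk with hk | hk
    · have h1 := Finset.mem_range.mp (Finset.mem_filter.mp hk).1
      rw [nbr_val, if_pos h1, if_pos h1]
      simpa using h1.le
    · obtain ⟨h1, h2⟩ := Finset.mem_Ico.mp hk
      rw [nbr_val, if_neg (by omega), if_neg (by omega)]
      simp only [List.length_append, List.length_replicate]
      omega
  -- produced neighbors are adjacent of color i
  have hprop : ∀ k ∈ A ∪ B, (GG c p).Adj x (nbr hc p x i k)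
      ∧ chi hc p s(x, nbr hc p x i k) = i := by
    intro k hk
    rcases Finset.mem_union.mp hk with hkk | hkk
    · obtain ⟨hkr, hki⟩ := Finset.mem_filter.mp hkk
      have h1 := Finset.mem_range.mp hkr
      have hlt : (nbr hc p x i k).1.length < x.1.length := by
        rw [hlen k hk, if_pos h1]; exact h1
      have hne : nbr hc p x i k ≠ x := fun h => by rw [h] at hlt; omega
      have hpre : (nbr hc p x i k).1 <+: x.1 := by
        rw [nbr_val, if_pos h1]; exact List.take_prefix _ _
      refine ⟨⟨Or.inr hpre, Ne.symm hne⟩, ?_⟩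
      rw [chi_of_lt' hc p hlt]
      have : x.1.getD (nbr hc p x i k).1.length ⟨0, hc⟩ = x.1.getD k ⟨0, hc⟩ := by
        rw [hlen k hk, if_pos h1]
      rw [this]
      exact hki
    · obtain ⟨h1, h2⟩ := Finset.mem_Ico.mp hkk
      have hgt : x.1.length < (nbr hc p x i k).1.length := by
        rw [hlen k hk, if_neg (by omega)]; omega
      have hne : x ≠ nbr hc p x i k := fun h => by rw [← h] at hgt; omega
      have hpre : x.1 <+: (nbr hc p x i k).1 := by
        rw [nbr_val, if_neg (by omega)]; exact List.prefix_append _ _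
      refine ⟨⟨Or.inl hpre, hne⟩, ?_⟩
      rw [chi_of_lt hc p hgt]
      have hmin : min (k - x.1.length + 1) (p i - x.1.count i) = k - x.1.length + 1 := by
        omega
      rw [nbr_val, if_neg (by omega)]
      rw [List.getD_append_right _ _ _ _ (le_refl _), Nat.sub_self, hmin]
      rw [List.getD_eq_getElem _ _ (by simp), List.getElem_replicate]
  -- conclude by an injection
  let T := {y : GV c p // (GG c p).Adj x y ∧ chi hc p s(x, y) = i}
  let f : {k : ℕ // k ∈ A ∪ B} → T := fun k => ⟨nbr hc p x i k.1, hprop k.1 k.2⟩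
  have hinj : Function.Injective f := by
    rintro ⟨k₁, hk₁⟩ ⟨k₂, hk₂⟩ h
    have hval : nbr hc p x i k₁ = nbr hc p x i k₂ := congrArg (Subtype.val) h
    have hl : (nbr hc p x i k₁).1.length = (nbr hc p x i k₂).1.length := by rw [hval]
    rw [hlen k₁ hk₁, hlen k₂ hk₂] at hl
    apply Subtype.ext
    dsimp only at hl ⊢
    split_ifs at hl <;> omega
  calc p i = (A ∪ B).card := hcard.symm
    _ = Nat.card {k : ℕ // k ∈ A ∪ B} := by
        rw [Nat.card_eq_fintype_card, Fintype.card_coe]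
    _ ≤ Nat.card T := Nat.card_le_card_of_injective f hinj
    _ = monDeg (GG c p) (chi hc p) x i := rfl

lemma monDeg_le_full (hc : 0 < c) (p : Fin c → ℕ) (x : GV c p)
    (hfull : ∀ j, x.1.count j = p j) (i : Fin c) :
    monDeg (GG c p) (chi hc p) x i ≤ p i := by
  classical
  set A : Finset ℕ := (Finset.range x.1.length).filter
    (fun k => x.1.getD k ⟨0, hc⟩ = i) with hA
  have hxlen : x.1.length = ∑ j, p j := by
    rw [length_eq_sum_count]
    exact Finset.sum_congr rfl fun j _ => hfull j
  -- every neighbor of x is a strict prefix of x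
  have hnb : ∀ y : GV c p, (GG c p).Adj x y → chi hc p s(x, y) = i →
      y.1 <+: x.1 ∧ y.1.length < x.1.length ∧ y.1.length ∈ A := by
    intro y hadj hchi
    have hylen : y.1.length ≤ x.1.length := by
      rw [hxlen]; exact length_le_sum y
    have h1 := adj_strict_prefix ((GG c p).adj_symm hadj) hylen
    refine ⟨h1.1, h1.2, ?_⟩
    rw [hA, Finset.mem_filter, Finset.mem_range]
    refine ⟨h1.2, ?_⟩
    rw [← chi_of_lt' hc p h1.2]
    exact hchi
  let T := {y : GV c p // (GG c p).Adj x y ∧ chi hc p s(x, y) = i}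
  let g : T → {k : ℕ // k ∈ A} := fun y => ⟨y.1.1.length, (hnb y.1 y.2.1 y.2.2).2.2⟩
  have hginj : Function.Injective g := by
    rintro ⟨y₁, hy₁⟩ ⟨y₂, hy₂⟩ h
    have hl : y₁.1.length = y₂.1.length := congrArg Subtype.val h
    have hp₁ := (hnb y₁ hy₁.1 hy₁.2).1
    have hp₂ := (hnb y₂ hy₂.1 hy₂.2).1
    apply Subtype.ext; apply Subtype.ext
    exact (List.prefix_of_prefix_length_le hp₁ hp₂ hl.le).eq_of_length_le hl.ge
  calc monDeg (GG c p) (chi hc p) x i = Nat.card T := rfl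
    _ ≤ Nat.card {k : ℕ // k ∈ A} := Nat.card_le_card_of_injective g hginj
    _ = A.card := by rw [Nat.card_eq_fintype_card, Fintype.card_coe]
    _ = x.1.count i := by rw [hA, card_filter_range_getD]
    _ = p i := hfull i

lemma full_count_aux (c : ℕ) (p : Fin c → ℕ) (j : Fin c) :
    ((List.finRange c).flatMap fun j' => List.replicate (p j') j').count j = p j := by
  classical
  rw [List.count_flatMap]
  have h1 : List.map (List.count j ∘ fun j' => List.replicate (p j') j') (List.finRange c)
      = List.map (fun j' => if j' = j then p j' else 0) (List.finRange c) := by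
    apply List.map_congr_left
    intro j' _
    simp only [Function.comp_apply, List.count_replicate]
    split_ifs with h h' h'
    · rfl
    · exact absurd (by simpa using h) h'
    · exact absurd (by simpa using h') h
    · rfl
  rw [h1, ← Fin.sum_univ_def]
  simp

/-- The full list, a vertex whose color-`i` monochromatic degree is exactly `p i`. -/
noncomputable def fullVert (c : ℕ) (p : Fin c → ℕ) : GV c p :=
  ⟨(List.finRange c).flatMap fun j => List.replicate (p j) j, by
    intro j
    rw [full_count_aux]⟩

lemma fullVert_count (c : ℕ) (p : Fin c → ℕ) (j : Fin c) :
    (fullVert c p).1.count j = p j :=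
  full_count_aux c p j

end PCCAux

namespace PCCAux

variable {c : ℕ}

open SimpleGraph

lemma monDeg_full (hc : 0 < c) (p : Fin c → ℕ) (i : Fin c) :
    monDeg (GG c p) (chi hc p) (fullVert c p) i = p i :=
  le_antisymm (monDeg_le_full hc p _ (fullVert_count c p) i) (monDeg_ge hc p _ i)

lemma minMonDeg_eq (hc : 0 < c) (p : Fin c → ℕ) :
    minMonDeg (GG c p) (chi hc p) = sInf {k : ℕ | ∃ i : Fin c, p i = k} := by
  classical
  have hneu : (Finset.univ : Finset (Fin c)).Nonempty := ⟨⟨0, hc⟩, Finset.mem_univ _⟩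
  obtain ⟨i₀, -, hmin⟩ := Finset.exists_min_image (Finset.univ : Finset (Fin c)) p hneu
  have hRHS : sInf {k : ℕ | ∃ i : Fin c, p i = k} = p i₀ := by
    apply le_antisymm (Nat.sInf_le (show ∃ i : Fin c, p i = p i₀ from ⟨i₀, rfl⟩))
    have hne0 : {k : ℕ | ∃ i : Fin c, p i = k}.Nonempty := ⟨p i₀, ⟨i₀, rfl⟩⟩
    obtain ⟨i', hi'⟩ := Nat.sInf_mem hne0
    rw [← hi']
    exact hmin i' (Finset.mem_univ _)
  have hLHS : minMonDeg (GG c p) (chi hc p) = p i₀ := by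
    apply le_antisymm
    · exact Nat.sInf_le (show ∃ (x : GV c p) (i : Fin c),
        monDeg (GG c p) (chi hc p) x i = p i₀ from ⟨fullVert c p, i₀, monDeg_full hc p i₀⟩)
    · have hne : {k : ℕ | ∃ (x : GV c p) (i : Fin c),
          monDeg (GG c p) (chi hc p) x i = k}.Nonempty :=
        ⟨p i₀, fullVert c p, i₀, monDeg_full hc p i₀⟩
      obtain ⟨x, i, hxi⟩ := Nat.sInf_mem hne
      calc p i₀ ≤ p i := hmin i (Finset.mem_univ _)
        _ ≤ monDeg (GG c p) (chi hc p) x i := monDeg_ge hc p x i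
        _ = _ := hxi
  rw [hLHS, hRHS]

lemma geom_sum_lt (hc2 : 2 ≤ c) : ∀ n : ℕ, ∑ k ∈ Finset.range n, c ^ k < c ^ n := by
  intro n
  induction n with
  | zero => simp
  | succ n ih =>
    rw [Finset.sum_range_succ, pow_succ]
    have h1 : 0 < c ^ n := pow_pos (by omega) n
    nlinarith

lemma card_le (hc2 : 2 ≤ c) (p : Fin c → ℕ) (hs : 0 < ∑ i, p i) :
    Nat.card (GV c p) ≤ (∑ i, p i) * c ^ (∑ i, p i) := by
  classical
  set S := ∑ i, p i with hS
  rcases eq_or_lt_of_le (show 1 ≤ S from hs) with h1 | h2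
  · -- S = 1
    have e1inj : Function.Injective
        (fun u : GV c p => (⟨u.1.length, by have := length_le_sum u; omega⟩ : Fin 2)) := by
      intro u v h
      have hl : u.1.length = v.1.length := congrArg Fin.val h
      apply Subtype.ext
      have hub : u.1.length ≤ 1 := by have := length_le_sum u; omega
      rcases Nat.le_one_iff_eq_zero_or_eq_one.mp hub with hu | hu
      · have h0 : u.1 = [] := List.length_eq_zero_iff.mp hu
        have h0' : v.1 = [] := List.length_eq_zero_iff.mp (hl ▸ hu)
        rw [h0, h0']
      · obtain ⟨a, ha⟩ := List.length_eq_one_iff.mp hu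
        obtain ⟨b, hb⟩ := List.length_eq_one_iff.mp (hl ▸ hu)
        rw [ha, hb]
        by_contra hne
        have hab : a ≠ b := fun h => hne (by rw [h])
        have hpa : 1 ≤ p a := le_trans (by simp [ha]) (u.2 a)
        have hpb : 1 ≤ p b := le_trans (by simp [hb]) (v.2 b)
        have hsum : p a + p b ≤ S := by
          rw [hS, ← Finset.sum_pair hab]
          exact Finset.sum_le_sum_of_subset (Finset.subset_univ _)
        omega
    calc Nat.card (GV c p) ≤ Nat.card (Fin 2) := Nat.card_le_card_of_injective _ e1inj
      _ = 2 := by simp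
      _ ≤ S * c ^ S := by rw [← h1]; simpa using hc2
  · -- 2 ≤ S
    let e : GV c p → Σ k : Fin (S + 1), (Fin k.1 → Fin c) := fun u =>
      ⟨⟨u.1.length, by have := length_le_sum u; omega⟩, fun m => u.1.get ⟨m.1, m.2⟩⟩
    have einj : Function.Injective e := by
      intro u v h
      have h1 : u.1.length = v.1.length := congrArg (fun z => (Sigma.fst z).1) h
      apply Subtype.ext
      apply List.ext_get h1
      intro m hm1 hm2
      have h2 : HEq (e u).snd (e v).snd := (Sigma.ext_iff.mp h).2
      have h3 := (Fin.heq_fun_iff h1).mp h2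
      exact h3 ⟨m, hm1⟩
    have hcard : Nat.card (Σ k : Fin (S + 1), (Fin k.1 → Fin c))
        = ∑ k ∈ Finset.range (S + 1), c ^ k := by
      rw [Nat.card_eq_fintype_card, Fintype.card_sigma,
        ← Fin.sum_univ_eq_sum_range (fun k => c ^ k) (S + 1)]
      apply Finset.sum_congr rfl
      intro k _
      simp [Fintype.card_fun]
    have hgeom := geom_sum_lt hc2 S
    have hcS : 0 < c ^ S := pow_pos (by omega) S
    calc Nat.card (GV c p) ≤ Nat.card (Σ k : Fin (S + 1), (Fin k.1 → Fin c)) :=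
          Nat.card_le_card_of_injective e einj
      _ = ∑ k ∈ Finset.range (S + 1), c ^ k := hcard
      _ = ∑ k ∈ Finset.range S, c ^ k + c ^ S := Finset.sum_range_succ _ _
      _ ≤ 2 * c ^ S := by omega
      _ ≤ S * c ^ S := Nat.mul_le_mul_right _ (by omega)

end PCCAux


/-- The recursive construction `G(p₁,…,p_c)` of the paper, packaged with the
order bound of its Lemma: for nonnegative integers `p₁,…,p_c` with
`s = p₁ + ⋯ + p_c > 0` there is a `c`-edge-colored graph with no properly
colored cycle, minimum monochromatic degree `min {pᵢ}`, and at most `s·c^s`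
vertices. -/
theorem exists_no_properly_colored_cycle_order_bound
    (c : ℕ) (hc : 2 ≤ c) (p : Fin c → ℕ) (hs : 0 < ∑ i, p i) :
    ∃ (V : Type) (_ : Fintype V) (G : SimpleGraph V) (χ : Sym2 V → Fin c),
      ¬ HasProperlyColoredCycle G χ ∧
      minMonDeg G χ = sInf {k : ℕ | ∃ i : Fin c, p i = k} ∧
      Nat.card V ≤ (∑ i, p i) * c ^ (∑ i, p i) := by
  have hc0 : 0 < c := by omega
  exact ⟨PCCAux.GV c p, inferInstance, PCCAux.GG c p, PCCAux.chi hc0 p,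
    PCCAux.no_pcc hc0 p, PCCAux.minMonDeg_eq hc0 p, PCCAux.card_le hc p hs⟩
end

section
/- For every integer c ≥ 2 and every integer n ≥ c, there exists a c-edge-colored graph G on exactly n vertices with no properly colored cycle such that δ_mon(G) + 1 ≥ (1/c)·(log_c n − log_c (log_c n)), where logarithms are to base c. In particular, the function d(n,c) — the minimum k such that every c-edge-colored graph of order n with minimum monochromatic degree at least k has a properly colored cycle — satisfies d(n,c) ≥ (1/c)(log_c n − log_c log_c n). -/
/-- `d(n,c)`: the minimum `k` such that every `c`-edge-colored graph of order
`n` with minimum monochromatic degree at least `k` has a properly colored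
cycle. -/
noncomputable def dFun (n c : ℕ) : ℕ :=
  sInf {k : ℕ | ∀ (V : Type) (_ : Fintype V) (G : SimpleGraph V) (χ : Sym2 V → Fin c),
    Nat.card V = n → k ≤ minMonDeg G χ → HasProperlyColoredCycle G χ}

namespace PCCaux
variable {c : ℕ}



/-- the full list: each color exactly k times -/
def Lfull (c k : ℕ) : List (Fin c) := ((List.finRange c).map (fun i => List.replicate k i)).flatten

lemma count_Lfull (k : ℕ) (i : Fin c) : (Lfull c k).count i = k := by
  rw [Lfull, List.count_flatten, List.map_map]
  have : ∀ j : Fin c, (List.count i ∘ fun i => List.replicate k i) j = if j = i then k else 0 := by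
    intro j; simp [List.count_replicate]
  rw [List.map_congr_left (fun j _ => this j), ← Fin.sum_univ_def]
  simp

def VT (c k m : ℕ) : Type :=
  {p : List (Fin c) × ℕ // (∀ i, p.1.count i ≤ k) ∧ p.2 < (if p.1 = Lfull c k then m else 1)}

instance (c k m : ℕ) : DecidableEq (VT c k m) := by unfold VT; infer_instance

def GG (c k m : ℕ) : SimpleGraph (VT c k m) where
  Adj p q := p.1.1 ≠ q.1.1 ∧ (p.1.1 <+: q.1.1 ∨ q.1.1 <+: p.1.1)
  symm := ⟨by rintro p q ⟨h1, h2⟩; exact ⟨h1.symm, h2.symm⟩⟩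
  loopless := ⟨by rintro p ⟨h1, _⟩; exact h1 rfl⟩

def col [NeZero c] (u v : List (Fin c)) : Fin c :=
  if h : u.length < v.length then v.get ⟨u.length, h⟩
  else if h' : v.length < u.length then u.get ⟨v.length, h'⟩ else 0

lemma col_comm [NeZero c] (u v : List (Fin c)) : col u v = col v u := by
  unfold col
  rcases lt_trichotomy u.length v.length with h | h | h
  · rw [dif_pos h, dif_neg (by omega), dif_pos h]
  · rw [dif_neg (by omega), dif_neg (by omega), dif_neg (by omega), dif_neg (by omega)]
  · rw [dif_neg (by omega), dif_pos h, dif_pos h]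

def chi (c k m : ℕ) [NeZero c] : Sym2 (VT c k m) → Fin c :=
  Sym2.lift ⟨fun p q => col p.1.1 q.1.1, fun p q => col_comm _ _⟩

lemma chi_mk [NeZero c] {k m : ℕ} (p q : VT c k m) : chi c k m s(p, q) = col p.1.1 q.1.1 := rfl

lemma getElem_append_cons (u s : List (Fin c)) (i : Fin c) :
    (u ++ i :: s)[u.length]'(by simp) = i := by
  rw [List.getElem_append_right (le_refl _)]
  simp

lemma col_append_cons [NeZero c] (u s : List (Fin c)) (i : Fin c) :
    col u (u ++ i :: s) = i := by
  have h : u.length < (u ++ i :: s).length := by simp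
  rw [col, dif_pos h]
  simpa using getElem_append_cons u s i


lemma length_eq_sum_counts (l : List (Fin c)) : l.length = ∑ i : Fin c, l.count i := by
  induction l with
  | nil => simp
  | cons a t ih =>
    simp only [List.length_cons, ih, List.count_cons]
    rw [Finset.sum_add_distrib]
    simp [Finset.sum_ite_eq]

lemma length_le_of_counts {k : ℕ} (l : List (Fin c)) (h : ∀ i, l.count i ≤ k) :
    l.length ≤ c * k := by
  rw [length_eq_sum_counts]
  calc ∑ i : Fin c, l.count i ≤ ∑ _i : Fin c, k := Finset.sum_le_sum (fun i _ => h i)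
  _ = c * k := by simp [mul_comm]

abbrev Lists (c k : ℕ) : Type := {l : List (Fin c) // ∀ i, l.count i ≤ k}

instance finLists (c k : ℕ) : Finite (Lists c k) := by
  have : Finite {l : List (Fin c) // l.length ≤ c * k} :=
    (List.finite_length_le (Fin c) (c*k)).to_subtype
  apply Finite.of_injective
    (fun p : Lists c k => (⟨p.1, length_le_of_counts p.1 p.2⟩ : {l : List (Fin c) // l.length ≤ c * k}))
  intro a b hab
  simp only [Subtype.mk.injEq] at hab
  exact Subtype.ext hab


def lenEquiv (c L : ℕ) :
    {l : List (Fin c) // l.length ≤ L + 1} ≃ (Unit ⊕ (Fin c × {l : List (Fin c) // l.length ≤ L})) where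
  toFun p := match p with
    | ⟨[], _⟩ => Sum.inl ()
    | ⟨a :: t, h⟩ => Sum.inr (a, ⟨t, by simpa using h⟩)
  invFun q := match q with
    | Sum.inl _ => ⟨[], by simp⟩
    | Sum.inr (a, ⟨t, h⟩) => ⟨a :: t, by simpa using h⟩
  left_inv p := by rcases p with ⟨l, h⟩; cases l <;> rfl
  right_inv q := by rcases q with _ | ⟨a, ⟨t, h⟩⟩ <;> rfl

noncomputable def SL (c L : ℕ) : ℕ := Nat.card {l : List (Fin c) // l.length ≤ L}

instance finLen (c L : ℕ) : Finite {l : List (Fin c) // l.length ≤ L} :=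
  (List.finite_length_le (Fin c) L).to_subtype

lemma SL_zero : SL c 0 = 1 := by
  rw [SL, Nat.card_eq_one_iff_unique]
  constructor
  · constructor
    rintro ⟨l, hl⟩ ⟨l', hl'⟩
    have : l = [] := List.length_eq_zero_iff.mp (Nat.le_zero.mp hl)
    have : l' = [] := List.length_eq_zero_iff.mp (Nat.le_zero.mp hl')
    subst_vars; rfl
  · exact ⟨⟨[], by simp⟩⟩

lemma SL_succ (L : ℕ) : SL c (L + 1) = 1 + c * SL c L := by
  rw [SL, Nat.card_congr (lenEquiv c L), Nat.card_sum, Nat.card_prod]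
  simp [SL]

lemma SL_le (hc : 2 ≤ c) (L : ℕ) : SL c L + 1 ≤ 2 * c ^ L := by
  induction L with
  | zero => simp [SL_zero]
  | succ L ih =>
    rw [SL_succ]
    have h1 : c * (SL c L + 1) ≤ c * (2 * c ^ L) := Nat.mul_le_mul_left c ih
    have h2 : c * (2 * c ^ L) = 2 * c ^ (L + 1) := by ring
    rw [Nat.mul_add, mul_one, h2] at h1
    omega


def pref (i : Fin c) : List (Fin c) → ℕ → List (Fin c)
  | [], _ => []
  | a :: l, 0 => if a = i then [] else a :: pref i l 0
  | a :: l, (j+1) => if a = i then a :: pref i l j else a :: pref i l (j+1)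

lemma pref_spec (i : Fin c) : ∀ (l : List (Fin c)) (j : ℕ), j < l.count i →
    (∃ s, l = pref i l j ++ i :: s) ∧ (pref i l j).count i = j := by
  intro l
  induction l with
  | nil => intro j hj; simp at hj
  | cons a t ih =>
    intro j hj
    by_cases hai : a = i
    · subst hai
      cases j with
      | zero =>
        rw [pref, if_pos rfl]
        exact ⟨⟨t, by simp⟩, by simp⟩
      | succ j =>
        rw [List.count_cons_self] at hj
        obtain ⟨⟨s, hs⟩, hcnt⟩ := ih j (by omega)
        rw [pref, if_pos rfl]
        refine ⟨⟨s, by rw [List.cons_append, ← hs]⟩, ?_⟩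
        rw [List.count_cons_self, hcnt]
    · have hcnt' : (a :: t).count i = t.count i := by
        rw [List.count_cons_of_ne hai]
      rw [hcnt'] at hj
      obtain ⟨⟨s, hs⟩, hcnt⟩ := ih j hj
      have hpref : pref i (a :: t) j = a :: pref i t j := by
        cases j with
        | zero => rw [pref, if_neg hai]
        | succ j => rw [pref, if_neg hai]
      rw [hpref]
      refine ⟨⟨s, by rw [List.cons_append, ← hs]⟩, ?_⟩
      rw [List.count_cons_of_ne hai, hcnt]


def nbrList (l : List (Fin c)) (i : Fin c) (j : ℕ) : List (Fin c) :=
  if j < l.count i then pref i l j else l ++ i :: List.replicate (j - l.count i - 1) i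

variable {k : ℕ} {l : List (Fin c)} {i : Fin c} {j : ℕ}

lemma nbrList_append : ∀ (hj : ¬ j < l.count i),
    nbrList l i j = l ++ i :: List.replicate (j - l.count i - 1) i := fun h => if_neg h

lemma nbrList_count (hj : j ≤ k) (hne : j ≠ l.count i) (hl : ∀ i', l.count i' ≤ k) :
    (nbrList l i j).count i = j := by
  rw [nbrList]
  split_ifs with h
  · exact (pref_spec i l j h).2
  · have h' : l.count i < j := by omega
    simp [List.count_append, List.count_cons, List.count_replicate]
    omega

lemma nbrList_counts (hj : j ≤ k) (hne : j ≠ l.count i) (hl : ∀ i', l.count i' ≤ k) :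
    ∀ i', (nbrList l i j).count i' ≤ k := by
  intro i'
  rw [nbrList]
  split_ifs with h
  · obtain ⟨⟨s, hs⟩, -⟩ := pref_spec i l j h
    have hsub : List.Sublist (pref i l j) l := List.IsPrefix.sublist ⟨i :: s, hs.symm⟩
    exact le_trans (hsub.count_le i') (hl i')
  · have h' : l.count i < j := by omega
    rw [List.count_append]
    by_cases hii : i' = i
    · subst hii
      rw [List.count_cons_self, List.count_replicate]
      simp only [beq_self_eq_true, if_true]
      omega
    · rw [List.count_cons_of_ne (Ne.symm hii), List.count_replicate, if_neg (by simpa using Ne.symm hii)]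
      simpa using hl i'

lemma nbrList_adj (hj : j ≤ k) (hne : j ≠ l.count i) :
    l ≠ nbrList l i j ∧ (l <+: nbrList l i j ∨ nbrList l i j <+: l) := by
  rw [nbrList]
  split_ifs with h
  · obtain ⟨⟨s, hs⟩, -⟩ := pref_spec i l j h
    refine ⟨?_, Or.inr ⟨i :: s, hs.symm⟩⟩
    intro heq
    have := congrArg List.length hs
    rw [← heq] at this
    simp at this
  · refine ⟨?_, Or.inl ⟨_, rfl⟩⟩
    intro heq
    have := congrArg List.length heq
    simp at this

lemma nbrList_col [NeZero c] (hj : j ≤ k) (hne : j ≠ l.count i) :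
    col l (nbrList l i j) = i := by
  rw [nbrList]
  split_ifs with h
  · obtain ⟨⟨s, hs⟩, -⟩ := pref_spec i l j h
    set q := pref i l j with hq
    rw [hs, col_comm (q ++ i :: s) q]
    exact col_append_cons _ _ _
  · exact col_append_cons _ _ _

section Deg
variable {k m : ℕ}

lemma tag_lt (hm : 1 ≤ m) (l : List (Fin c)) : 0 < (if l = Lfull c k then m else 1) := by
  split_ifs <;> omega

instance finVT (c k m : ℕ) : Finite (VT c k m) := by
  apply Finite.of_injective (fun p : VT c k m =>
    ((⟨p.1.1, p.2.1⟩ : Lists c k),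
     (⟨p.1.2, lt_of_lt_of_le p.2.2 (by split_ifs <;> omega)⟩ : Fin (m + 1))))
  rintro ⟨⟨l, t⟩, h⟩ ⟨⟨l', t'⟩, h'⟩ hab
  simp only [Prod.mk.injEq, Subtype.mk.injEq, Fin.mk.injEq] at hab
  exact Subtype.ext (Prod.ext hab.1 hab.2)

lemma monDeg_ge [NeZero c] (hm : 1 ≤ m) (x : VT c k m) (i : Fin c) :
    k ≤ monDeg (GG c k m) (chi c k m) x i := by
  have ht : x.1.1.count i < k + 1 := Nat.lt_succ_of_le (x.2.1 i)
  have hcount : ∀ j : {j : Fin (k+1) // (j : ℕ) ≠ x.1.1.count i},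
      (nbrList x.1.1 i (j.1 : ℕ)).count i = (j.1 : ℕ) :=
    fun j => nbrList_count (Nat.lt_succ_iff.mp j.1.isLt) j.2 x.2.1
  let F : {j : Fin (k+1) // (j : ℕ) ≠ x.1.1.count i} →
      {y : VT c k m // (GG c k m).Adj x y ∧ chi c k m s(x, y) = i} := fun j =>
    ⟨⟨(nbrList x.1.1 i (j.1 : ℕ), 0),
      nbrList_counts (Nat.lt_succ_iff.mp j.1.isLt) j.2 x.2.1, tag_lt hm _⟩,
      ⟨(nbrList_adj (k := k) (Nat.lt_succ_iff.mp j.1.isLt) j.2).1,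
       (nbrList_adj (k := k) (Nat.lt_succ_iff.mp j.1.isLt) j.2).2⟩,
      by exact (chi_mk _ _).trans (nbrList_col (Nat.lt_succ_iff.mp j.1.isLt) j.2)⟩
  have hF : Function.Injective F := by
    intro a b hab
    have hl : nbrList x.1.1 i (a.1 : ℕ) = nbrList x.1.1 i (b.1 : ℕ) := by
      have := congrArg (fun y => y.1.1.1) hab
      exact this
    have : (a.1 : ℕ) = (b.1 : ℕ) := by
      rw [← hcount a, ← hcount b, hl]
    exact Subtype.ext (Fin.ext this)
  have hcard : Nat.card {j : Fin (k+1) // (j : ℕ) ≠ x.1.1.count i} = k := by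
    rw [Nat.card_eq_fintype_card]
    have he : ∀ j : Fin (k+1), ((j : ℕ) ≠ x.1.1.count i) ↔ ¬ (j = ⟨x.1.1.count i, ht⟩) := by
      intro j; rw [not_iff_not, Fin.ext_iff]
    rw [Fintype.card_congr (Equiv.subtypeEquivRight he), Fintype.card_subtype_compl,
      Fintype.card_subtype_eq]
    simp
  calc k = Nat.card {j : Fin (k+1) // (j : ℕ) ≠ x.1.1.count i} := hcard.symm
  _ ≤ Nat.card {y : VT c k m // (GG c k m).Adj x y ∧ chi c k m s(x, y) = i} :=
      Nat.card_le_card_of_injective F hF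
  _ = monDeg (GG c k m) (chi c k m) x i := rfl

lemma minMonDeg_ge [NeZero c] (hm : 1 ≤ m) : k ≤ minMonDeg (GG c k m) (chi c k m) := by
  apply le_csInf
  · exact ⟨monDeg (GG c k m) (chi c k m) ⟨([], 0), fun i => by simp, tag_lt hm _⟩ 0,
      ⟨_, 0, rfl⟩⟩
  · rintro b ⟨x, i, rfl⟩
    exact monDeg_ge hm x i

end Deg

section Card
variable {k m : ℕ}

noncomputable def Nk (c k : ℕ) : ℕ := Nat.card (Lists c k)

def vtEquiv (c k m : ℕ) : VT c k m ≃ ({l : Lists c k // l.1 ≠ Lfull c k} ⊕ Fin m) where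
  toFun p := if h : p.1.1 = Lfull c k then
      Sum.inr ⟨p.1.2, by have := p.2.2; rwa [if_pos h] at this⟩
    else Sum.inl ⟨⟨p.1.1, p.2.1⟩, h⟩
  invFun q := match q with
    | Sum.inl ⟨⟨l, hl⟩, hne⟩ => ⟨(l, 0), hl, by rw [if_neg hne]; omega⟩
    | Sum.inr j => ⟨(Lfull c k, j.1), fun i => le_of_eq (count_Lfull k i),
        by rw [if_pos rfl]; exact j.2⟩
  left_inv p := by
    rcases p with ⟨⟨l, t⟩, h1, h2⟩
    by_cases h : l = Lfull c k
    · subst h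
      simp only [dif_pos rfl]
      rfl
    · simp only [dif_neg h]
      have ht : t = 0 := by rw [if_neg h] at h2; omega
      subst ht; rfl
  right_inv q := by
    rcases q with ⟨⟨l, hl⟩, hne⟩ | j
    · simp only [dif_neg hne]
    · simp only [dif_pos rfl]
      rfl

lemma card_ne_full (c k : ℕ) :
    Nat.card {l : Lists c k // l.1 ≠ Lfull c k} = Nk c k - 1 := by
  haveI : Fintype (Lists c k) := Fintype.ofFinite _
  have he : ∀ l : Lists c k, (l.1 ≠ Lfull c k) ↔
      ¬ (l = ⟨Lfull c k, fun i => le_of_eq (count_Lfull k i)⟩) := by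
    intro l; rw [not_iff_not, Subtype.ext_iff]
  rw [Nk, Nat.card_eq_fintype_card, Nat.card_eq_fintype_card,
    Fintype.card_congr (Equiv.subtypeEquivRight he), Fintype.card_subtype_compl,
    Fintype.card_subtype_eq]

lemma card_VT (c k m : ℕ) : Nat.card (VT c k m) = (Nk c k - 1) + m := by
  rw [Nat.card_congr (vtEquiv c k m), Nat.card_sum, card_ne_full, Nat.card_eq_fintype_card]
  simp

lemma Nk_pos (c k : ℕ) : 1 ≤ Nk c k :=
  Nat.card_pos_iff.mpr ⟨⟨⟨[], fun i => by simp⟩⟩, inferInstance⟩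

lemma Nk_le_SL (c k : ℕ) : Nk c k ≤ SL c (c * k) := by
  apply Nat.card_le_card_of_injective
    (fun p : Lists c k => (⟨p.1, length_le_of_counts p.1 p.2⟩ : {l : List (Fin c) // l.length ≤ c * k}))
  intro a b hab
  simp only [Subtype.mk.injEq] at hab
  exact Subtype.ext hab

lemma Nk_ge [NeZero c] (k : ℕ) : k + 1 ≤ Nk c k := by
  have : Nat.card (Fin (k+1)) ≤ Nk c k := by
    apply Nat.card_le_card_of_injective
      (fun j : Fin (k+1) => (⟨List.replicate j.1 (0 : Fin c), fun i => by
        rw [List.count_replicate]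
        split_ifs
        · exact Nat.lt_succ_iff.mp j.isLt
        · exact Nat.zero_le _⟩ : Lists c k))
    intro a b hab
    simp only [Subtype.mk.injEq] at hab
    have h2 := congrArg List.length hab
    simp only [List.length_replicate] at h2
    exact Fin.ext h2
  simpa using this

lemma Nk_zero (c : ℕ) : Nk c 0 = 1 := by
  rw [Nk, Nat.card_eq_one_iff_unique]
  constructor
  · constructor
    rintro ⟨l, hl⟩ ⟨l', hl'⟩
    have h1 : l = [] := List.eq_nil_iff_forall_not_mem.mpr
      (fun a ha => by have := hl a; rw [Nat.le_zero, List.count_eq_zero] at this; exact this ha)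
    have h2 : l' = [] := List.eq_nil_iff_forall_not_mem.mpr
      (fun a ha => by have := hl' a; rw [Nat.le_zero, List.count_eq_zero] at this; exact this ha)
    subst_vars; rfl
  · exact ⟨⟨[], fun i => by simp⟩⟩

end Card

section NoPCC
open SimpleGraph
variable [NeZero c] {k m : ℕ}

lemma col_strict {a b : List (Fin c)} (h : a <+: b) (hne : a ≠ b) :
    col a b = b.getD a.length 0 ∧ col b a = b.getD a.length 0 := by
  have hlen : a.length < b.length :=
    lt_of_le_of_ne h.length_le (fun he => hne (h.eq_of_length he))
  constructor
  · rw [col, dif_pos hlen, List.get_eq_getElem, List.getD_eq_getElem b 0 hlen]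
  · rw [col_comm, col, dif_pos hlen, List.get_eq_getElem, List.getD_eq_getElem b 0 hlen]

lemma br_eq_of_adj {u x y : VT c k m} (hadj : (GG c k m).Adj x y)
    (hx : u.1.1 <+: x.1.1 ∧ u.1.1 ≠ x.1.1) (hy : u.1.1 <+: y.1.1 ∧ u.1.1 ≠ y.1.1) :
    x.1.1.getD u.1.1.length 0 = y.1.1.getD u.1.1.length 0 := by
  have hlx : u.1.1.length < x.1.1.length :=
    lt_of_le_of_ne hx.1.length_le (fun he => hx.2 (hx.1.eq_of_length he))
  have hly : u.1.1.length < y.1.1.length :=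
    lt_of_le_of_ne hy.1.length_le (fun he => hy.2 (hy.1.eq_of_length he))
  rcases hadj.2 with h | h
  · rw [List.getD_eq_getElem _ 0 hlx, List.getD_eq_getElem _ 0 hly]
    exact h.getElem hlx
  · rw [List.getD_eq_getElem _ 0 hlx, List.getD_eq_getElem _ 0 hly]
    exact (h.getElem hly).symm

lemma strict_ext_full {l : List (Fin c)} (hl : Lfull c k <+: l) (hne : l ≠ Lfull c k) :
    ∃ i, k < l.count i := by
  obtain ⟨t, ht⟩ := hl
  cases t with
  | nil => exact absurd (by rw [← ht]; simp) hne
  | cons d t' =>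
    refine ⟨d, ?_⟩
    rw [← ht, List.count_append, count_Lfull, List.count_cons_self]
    omega

lemma prefix_chain {u : VT c k m} : ∀ {a b : VT c k m} (q : (GG c k m).Walk a b),
    u.1.1 <+: a.1.1 → (∀ z ∈ q.support, u.1.1.length ≤ z.1.1.length) →
    ∀ z ∈ q.support, u.1.1 <+: z.1.1 := by
  intro a b q
  induction q with
  | nil =>
    intro ha _ z hz
    rw [Walk.support_nil, List.mem_singleton] at hz
    subst hz; exact ha
  | @cons x y w hadj q ih =>
    intro ha hlen z hz
    have hy : u.1.1 <+: y.1.1 := by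
      rcases hadj.2 with h | h
      · exact ha.trans h
      · exact List.prefix_of_prefix_length_le ha h
          (hlen y (by simp [Walk.support_cons]))
    rw [Walk.support_cons, List.mem_cons] at hz
    rcases hz with rfl | hz
    · exact ha
    · exact ih hy (fun z' hz' => hlen z' (by simp [Walk.support_cons, hz'])) z hz

lemma getLast_of_eq_singleton {α : Type} (L : List α) (hL : L ≠ []) (e : α) (hLe : L = [e]) :
    L.getLast hL = e := by subst hLe; rfl

lemma get_zero_of_cons {α : Type} (L l : List α) (e : α) (h : L = e :: l)
    (hp : 0 < L.length) : L.get ⟨0, hp⟩ = e := by subst h; rfl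

lemma getLast_cons_eq {α : Type} (L l : List α) (e : α) (hL : L ≠ []) (h : L = e :: l)
    (hl : l ≠ []) : L.getLast hL = l.getLast hl := by subst h; exact List.getLast_cons hl

lemma lastcol {u : VT c k m} : ∀ {a b : VT c k m} (q : (GG c k m).Walk a b), b = u →
    a ≠ u → (∀ z ∈ q.support, z ≠ u → (u.1.1 <+: z.1.1 ∧ u.1.1 ≠ z.1.1)) →
    (u ∉ q.support.dropLast) → ∀ (hq : q.edges ≠ []),
    chi c k m (q.edges.getLast hq) = a.1.1.getD u.1.1.length 0 := by
  intro a b q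
  induction q with
  | nil =>
    intro hb hne _ _ hq
    exact absurd hb hne
  | @cons x y bu hadj q' ih =>
    intro hb hne hpre honce hq
    subst hb
    by_cases hq'e : q'.edges = []
    · have hlen0 : q'.length = 0 := by rw [← Walk.length_edges, hq'e]; rfl
      have hy : y = bu := Walk.eq_of_length_eq_zero hlen0
      subst hy
      rw [getLast_of_eq_singleton _ hq s(x, y) (by rw [Walk.edges_cons, hq'e])]
      have hx := hpre x (by simp [Walk.support_cons]) hne
      rw [chi_mk]
      exact (col_strict hx.1 hx.2).2
    · have hsupne := Walk.support_ne_nil q'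
      have hlen1 : 0 < q'.length := by
        rw [← Walk.length_edges]
        exact List.length_pos_iff.mpr hq'e
      have htailne : q'.support.tail ≠ [] := by
        apply List.ne_nil_of_length_pos
        rw [List.length_tail, Walk.length_support]
        omega
      have hyne : y ≠ bu := by
        intro hyu
        apply honce
        rw [Walk.support_cons, List.dropLast_cons_of_ne_nil hsupne, List.mem_cons]
        right
        rw [Walk.support_eq_cons q', List.dropLast_cons_of_ne_nil htailne, List.mem_cons]
        left; exact hyu.symm
      have hpre' : ∀ z ∈ q'.support, z ≠ bu → (bu.1.1 <+: z.1.1 ∧ bu.1.1 ≠ z.1.1) :=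
        fun z hz => hpre z (by rw [Walk.support_cons, List.mem_cons]; right; exact hz)
      have honce' : bu ∉ q'.support.dropLast := by
        intro hmem
        apply honce
        rw [Walk.support_cons, List.dropLast_cons_of_ne_nil hsupne, List.mem_cons]
        right; exact hmem
      have hstep := ih rfl hyne hpre' honce' hq'e
      rw [getLast_cons_eq _ q'.edges s(x, y) hq (Walk.edges_cons hadj q') hq'e, hstep]
      exact (br_eq_of_adj hadj (hpre x (by simp [Walk.support_cons]) hne)
        (hpre y (by simp [Walk.support_cons]) hyne)).symm

def QPC {V : Type} {c : ℕ} (χ : Sym2 V → Fin c) (l : List (Sym2 V)) : Prop :=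
  ∀ i : Fin l.length,
    χ (l.get i) ≠ χ (l.get ⟨((i : ℕ) + 1) % l.length, Nat.mod_lt _ i.pos⟩)

lemma QPC_rotate {V : Type} (χ : Sym2 V → Fin c) (l : List (Sym2 V)) (n : ℕ)
    (h : QPC χ l) : QPC χ (l.rotate n) := by
  intro i
  have hlen : (l.rotate n).length = l.length := l.length_rotate n
  have hpos : 0 < l.length := hlen ▸ i.pos
  rw [List.get_rotate, List.get_rotate]
  have key := h ⟨((i : ℕ) + n) % l.length, Nat.mod_lt _ hpos⟩
  convert key using 2
  congr 1
  apply Fin.ext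
  simp only [Fin.val_mk]
  generalize (i : ℕ) = iv
  rw [hlen, Nat.mod_add_mod, Nat.mod_add_mod]
  congr 1
  omega

theorem noPCC (c k m : ℕ) [NeZero c] (hm : 1 ≤ m) :
    ¬ HasProperlyColoredCycle (GG c k m) (chi c k m) := by
  rintro ⟨v, w, hcyc, hPC⟩
  have hPC' : QPC (chi c k m) w.edges := hPC
  -- pick a vertex of minimal list length on the cycle
  obtain ⟨u, humem', humin⟩ := Finset.exists_min_image w.support.toFinset
    (fun z => z.1.1.length) ⟨v, by simp [Walk.start_mem_support]⟩
  rw [List.mem_toFinset] at humem'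
  have humin' : ∀ z ∈ w.support, u.1.1.length ≤ z.1.1.length :=
    fun z hz => humin z (by simpa using hz)
  set w' := w.rotate u humem' with hw'
  have hcyc' : w'.IsCycle := hcyc.rotate humem'
  obtain ⟨nr, hnr⟩ := (Walk.rotate_edges w u humem').symm
  have hQ : QPC (chi c k m) w'.edges := by
    rw [← hnr]; exact QPC_rotate _ _ _ hPC'
  -- membership transfer
  have hrot := Walk.support_rotate w u humem'
  have hsup : ∀ z ∈ w'.support, z ∈ w.support := by
    intro z hz
    rw [Walk.support_eq_cons w', List.mem_cons] at hz
    rcases hz with rfl | hz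
    · exact humem'
    · exact List.mem_of_mem_tail (hrot.mem_iff.mp hz)
  -- decompose w' = cons hadj q
  have hnotnil : ¬ w'.Nil := by rw [Walk.nil_iff_eq_nil]; exact hcyc'.ne_nil
  obtain ⟨x, hadj, q, hcons⟩ := Walk.not_nil_iff.mp hnotnil
  have hxne : x ≠ u := fun h => hadj.1 (by rw [h])
  have hux : u.1.1 <+: x.1.1 := by
    rcases hadj.2 with h | h
    · exact h
    · have hlen := humin' x (hsup x (by rw [hcons]; simp [Walk.support_cons]))
      have hxeq := h.eq_of_length (le_antisymm h.length_le hlen)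
      exact absurd hxeq (Ne.symm hadj.1)
  have hufull : u.1.1 ≠ Lfull c k := by
    intro hf
    obtain ⟨i, hi⟩ := strict_ext_full (k := k) (hf ▸ hux)
      (fun h => hadj.1 (by rw [h, hf]))
    exact absurd (x.2.1 i) (by omega)
  -- all support vertices extend u
  have hext : ∀ z ∈ w'.support, u.1.1 <+: z.1.1 :=
    prefix_chain w' (List.prefix_refl _) (fun z hz => humin' z (hsup z hz))
  have hstrict : ∀ z ∈ w'.support, z ≠ u → (u.1.1 <+: z.1.1 ∧ u.1.1 ≠ z.1.1) := by
    intro z hz hzne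
    refine ⟨hext z hz, fun heq => ?_⟩
    have hpair : z.1.2 ≠ u.1.2 := by
      intro ht
      exact hzne (Subtype.ext (Prod.ext heq.symm ht))
    have h1 := z.2.2
    have h2 := u.2.2
    rw [← heq] at h1
    rw [if_neg hufull] at h1 h2
    omega
  -- facts about q
  have hqsup : ∀ z ∈ q.support, z ∈ w'.support := by
    intro z hz
    rw [hcons, Walk.support_cons, List.mem_cons]
    right; exact hz
  have hnodup : q.support.Nodup := by
    have h := hcyc'.2
    rw [hcons, Walk.support_cons] at h
    simpa using h
  have honce : u ∉ q.support.dropLast := by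
    intro hmem
    have hgl := Walk.getLast_support q
    have hsplit := List.dropLast_append_getLast (Walk.support_ne_nil q)
    rw [← hsplit] at hnodup
    have hdisj := List.disjoint_of_nodup_append hnodup
    exact hdisj hmem (by rw [hgl]; exact List.mem_singleton_self u)
  have hqe : q.edges ≠ [] := by
    intro h
    have : q.length = 0 := by rw [← Walk.length_edges, h]; rfl
    exact hxne (Walk.eq_of_length_eq_zero this)
  have hlast := lastcol q rfl hxne
    (fun z hz => hstrict z (hqsup z hz)) honce hqe
  -- first edge color
  have hfirst : chi c k m s(u, x) = x.1.1.getD u.1.1.length 0 := by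
    rw [chi_mk]
    exact (col_strict hux hadj.1).1
  -- contradiction with hQ
  have hL : w'.edges.length = q.edges.length + 1 := by
    rw [hcons, Walk.edges_cons, List.length_cons]
  have hLpos : 0 < w'.edges.length := by omega
  have key := hQ ⟨w'.edges.length - 1, by omega⟩
  apply key
  have hidx : ((w'.edges.length - 1 : ℕ) + 1) % w'.edges.length = 0 := by
    have : (w'.edges.length - 1) + 1 = w'.edges.length := by omega
    rw [this, Nat.mod_self]
  have hget0 : w'.edges.get ⟨((w'.edges.length - 1 : ℕ) + 1) % w'.edges.length,
      Nat.mod_lt _ (by omega : (0:ℕ) < w'.edges.length)⟩ = s(u, x) := by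
    have : w'.edges.get ⟨0, hLpos⟩ = s(u, x) :=
      get_zero_of_cons _ q.edges s(u, x) (by rw [hcons, Walk.edges_cons]) hLpos
    rw [← this]
    congr 1
    exact Fin.ext hidx
  have hgetlast : w'.edges.get ⟨w'.edges.length - 1, by omega⟩
      = q.edges.getLast hqe := by
    have h1 : w'.edges ≠ [] := List.ne_nil_of_length_pos hLpos
    have h2 : w'.edges.get ⟨w'.edges.length - 1, by omega⟩ = w'.edges.getLast h1 := by
      simp only [List.getLast_eq_getElem, List.get_eq_getElem]
    rw [h2]
    exact getLast_cons_eq _ q.edges s(u, x) h1 (by rw [hcons, Walk.edges_cons]) hqe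
  rw [hget0, hgetlast, hlast, hfirst]

end NoPCC

end PCCaux
open Real in
lemma analytic (c n k : ℕ) (hc : 2 ≤ c) (hn : c ≤ n) (hupper : n < 2 * c ^ (c * (k + 1))) :
    (1 / (c : ℝ)) * (Real.logb c n - Real.logb c (Real.logb c n)) ≤ (k : ℝ) + 1 := by
  have hc1 : (1 : ℝ) < c := by exact_mod_cast hc.trans_lt' one_lt_two
  have hcpos : (0 : ℝ) < c := lt_trans one_pos hc1
  have hnpos : (0 : ℝ) < n := by
    have : (2:ℕ) ≤ n := le_trans hc hn
    exact_mod_cast lt_of_lt_of_le Nat.zero_lt_two this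
  have hn1 : (1 : ℝ) ≤ logb c n := by
    rw [show (1:ℝ) = logb c c from (logb_self_eq_one hc1).symm]
    exact logb_le_logb_of_le hc1 hcpos (by exact_mod_cast hn)
  set e : ℕ := c * (k + 1) with he
  have hlogpow : logb c ((c : ℝ) ^ e) = e := by
    rw [logb_pow, logb_self_eq_one hc1, mul_one]
  have hepos : (2 : ℝ) ≤ e := by
    have : 2 ≤ e := le_trans hc (Nat.le_mul_of_pos_right c (Nat.succ_pos k))
    exact_mod_cast this
  rw [one_div, inv_mul_le_iff₀ hcpos]
  have hgoal : logb c n - logb c (logb c n) ≤ e → logb c n - logb c (logb c n) ≤ (c:ℝ) * ((k:ℝ) + 1) := by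
    intro h; rw [he] at h; push_cast at h ⊢; linarith
  apply hgoal
  by_cases hcase : (n : ℝ) ≤ (c : ℝ) ^ e
  · have h1 : logb c n ≤ e := by
      rw [← hlogpow]
      exact logb_le_logb_of_le hc1 hnpos hcase
    have h2 : 0 ≤ logb c (logb c n) := by
      rcases eq_or_lt_of_le hn1 with h | h
      · rw [← h]; simp
      · exact le_of_lt (logb_pos hc1 h)
    linarith
  · push_neg at hcase
    have h1 : logb c n ≤ logb c 2 + e := by
      have hle : (n : ℝ) ≤ 2 * (c : ℝ) ^ e := by
        have : (n:ℝ) < 2 * (c:ℝ) ^ e := by exact_mod_cast hupper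
        linarith
      calc logb c n ≤ logb c (2 * (c:ℝ) ^ e) := logb_le_logb_of_le hc1 hnpos hle
      _ = logb c 2 + logb c ((c:ℝ)^e) := logb_mul (by norm_num) (by positivity)
      _ = logb c 2 + e := by rw [hlogpow]
    have h2 : (2 : ℝ) ≤ logb c n := by
      calc (2:ℝ) ≤ e := hepos
      _ = logb c ((c:ℝ)^e) := hlogpow.symm
      _ ≤ logb c n := logb_le_logb_of_le hc1 (by positivity) (le_of_lt hcase)
    have h3 : logb c 2 ≤ logb c (logb c n) :=
      logb_le_logb_of_le hc1 two_pos h2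
    linarith

/-- For every `c ≥ 2` and every `n ≥ c` there is a `c`-edge-colored graph on
exactly `n` vertices with no properly colored cycle and
`δ_mon(G) + 1 ≥ (1/c)(log_c n − log_c log_c n)`; in particular
`d(n,c) ≥ (1/c)(log_c n − log_c log_c n)`. -/
theorem dFun_lower_bound (c n : ℕ) (hc : 2 ≤ c) (hn : c ≤ n) :
    (∃ (V : Type) (_ : Fintype V) (G : SimpleGraph V) (χ : Sym2 V → Fin c),
        Nat.card V = n ∧ ¬ HasProperlyColoredCycle G χ ∧
        (1 / (c : ℝ)) * (Real.logb c n - Real.logb c (Real.logb c n)) ≤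
          (minMonDeg G χ : ℝ) + 1) ∧
    (1 / (c : ℝ)) * (Real.logb c n - Real.logb c (Real.logb c n)) ≤ (dFun n c : ℝ) := by
  haveI : NeZero c := ⟨by omega⟩
  classical
  set P : ℕ → Prop := fun k => PCCaux.Nk c k ≤ n with hP
  have hP0 : P 0 := by rw [hP]; simp only [PCCaux.Nk_zero]; omega
  set k := Nat.findGreatest P n with hkdef
  have hkP : P k := Nat.findGreatest_spec (Nat.zero_le n) hP0
  have hk_upper : ¬ P (k + 1) := by
    intro hPk1
    have h1 : (k + 1) + 1 ≤ PCCaux.Nk c (k + 1) := PCCaux.Nk_ge (k + 1)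
    have h2 : PCCaux.Nk c (k+1) ≤ n := hPk1
    exact Nat.findGreatest_is_greatest (Nat.lt_succ_self k) (by omega) hPk1
  have hNk_le : PCCaux.Nk c k ≤ n := hkP
  have hn_lt : n < PCCaux.Nk c (k + 1) := lt_of_not_ge hk_upper
  have hupper : n < 2 * c ^ (c * (k + 1)) := by
    have h1 := PCCaux.Nk_le_SL c (k + 1)
    have h2 := PCCaux.SL_le hc (c * (k + 1))
    omega
  set m := n - PCCaux.Nk c k + 1 with hmdef
  have hm1 : 1 ≤ m := by omega
  have hNkpos := PCCaux.Nk_pos c k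
  have hcard : Nat.card (PCCaux.VT c k m) = n := by
    rw [PCCaux.card_VT]; omega
  have hminmon : k ≤ minMonDeg (PCCaux.GG c k m) (PCCaux.chi c k m) :=
    PCCaux.minMonDeg_ge hm1
  have hbound := analytic c n k hc hn hupper
  have hbound2 : (1 / (c : ℝ)) * (Real.logb c n - Real.logb c (Real.logb c n)) ≤
      (minMonDeg (PCCaux.GG c k m) (PCCaux.chi c k m) : ℝ) + 1 := by
    refine le_trans hbound ?_
    have : (k : ℝ) ≤ (minMonDeg (PCCaux.GG c k m) (PCCaux.chi c k m) : ℝ) := by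
      exact_mod_cast hminmon
    linarith
  haveI : Fintype (PCCaux.VT c k m) := Fintype.ofFinite _
  have hnoPCC := PCCaux.noPCC c k m hm1
  constructor
  · exact ⟨PCCaux.VT c k m, inferInstance, PCCaux.GG c k m, PCCaux.chi c k m,
      hcard, hnoPCC, hbound2⟩
  · set S := {k' : ℕ | ∀ (V : Type) (_ : Fintype V) (G : SimpleGraph V) (χ : Sym2 V → Fin c),
      Nat.card V = n → k' ≤ minMonDeg G χ → HasProperlyColoredCycle G χ} with hS
    have hd : dFun n c = sInf S := rfl
    have hnin : n ∈ S := by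
      intro V' instV' G' χ' hcard' hle
      exfalso
      haveI := instV'
      have hn2 : 2 ≤ n := le_trans hc hn
      have hVne : Nonempty V' := by
        have hpos : 0 < Nat.card V' := by omega
        exact (Nat.card_pos_iff.mp hpos).1
      obtain ⟨x⟩ := hVne
      set i0 : Fin c := ⟨0, by omega⟩
      have hmon_le : monDeg G' χ' x i0 ≤ n - 1 := by
        have hinj : Nat.card {y : V' // G'.Adj x y ∧ χ' s(x, y) = i0} ≤
            Nat.card {y : V' // y ≠ x} := by
          apply Nat.card_le_card_of_injective
            (fun p => (⟨p.1, p.2.1.ne'⟩ : {y : V' // y ≠ x}))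
          intro a b hab
          simp only [Subtype.mk.injEq] at hab
          exact Subtype.ext hab
        have hcompl : Nat.card {y : V' // y ≠ x} = n - 1 := by
          have he : ∀ y : V', (y ≠ x) ↔ ¬ (y = x) := fun y => Iff.rfl
          rw [Nat.card_eq_fintype_card,
            Fintype.card_subtype_compl, Fintype.card_subtype_eq]
          rw [← Nat.card_eq_fintype_card, hcard']
        rw [monDeg]
        omega
      have hmin_le : minMonDeg G' χ' ≤ monDeg G' χ' x i0 := Nat.sInf_le ⟨x, i0, rfl⟩
      omega
    have helem : ∀ b ∈ S, minMonDeg (PCCaux.GG c k m) (PCCaux.chi c k m) + 1 ≤ b := by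
      intro b hb
      by_contra hlt
      push_neg at hlt
      exact hnoPCC (hb _ inferInstance _ _ hcard (by omega))
    have hfin : minMonDeg (PCCaux.GG c k m) (PCCaux.chi c k m) + 1 ≤ dFun n c := by
      rw [hd]
      exact le_csInf ⟨n, hnin⟩ helem
    refine le_trans hbound2 ?_
    exact_mod_cast hfin
end

section
/- For every integer n ≥ 2, there exists a 2-arc-colored digraph D on exactly n vertices with no properly colored directed cycle such that δ⁺_mon(D) + 1 ≥ (1/2)·(log_2 n − log_2 (log_2 n)). In particular, d⃗(n,2), the minimum k such that every 2-arc-colored digraph of order n with δ⁺_mon ≥ k has a properly colored directed cycle, satisfies d⃗(n,2) ≥ (1/2)(log_2 n − log_2 log_2 n). -/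
/-- The number of arcs of color `i` with tail `x` in the `c`-arc-colored
digraph given by the arc relation `A` and coloring `col`. -/
noncomputable def monOutDeg {V : Type} {c : ℕ} (A : V → V → Prop)
    (col : V → V → Fin c) (x : V) (i : Fin c) : ℕ :=
  Nat.card {y : V // A x y ∧ col x y = i}

/-- The minimum monochromatic out-degree `δ⁺_mon(D)` of a `c`-arc-colored
digraph. -/
noncomputable def minMonOutDeg {V : Type} {c : ℕ} (A : V → V → Prop)
    (col : V → V → Fin c) : ℕ :=
  sInf {k : ℕ | ∃ (x : V) (i : Fin c), monOutDeg A col x i = k}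

/-- `v : ZMod m → V` is a properly colored directed cycle: `m ≥ 2` pairwise
distinct vertices, consecutive ones joined by arcs, and any two (cyclically)
consecutive arcs have distinct colors. -/
def IsProperlyColoredDiCycle {V : Type} {c : ℕ} (A : V → V → Prop)
    (col : V → V → Fin c) (m : ℕ) (v : ZMod m → V) : Prop :=
  2 ≤ m ∧ Function.Injective v ∧
    (∀ i : ZMod m, A (v i) (v (i + 1))) ∧
    (∀ i : ZMod m, col (v i) (v (i + 1)) ≠ col (v (i + 1)) (v (i + 2)))

/-- The `c`-arc-colored digraph `(A, col)` has a properly colored directed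
cycle. -/
def HasProperlyColoredDiCycle {V : Type} {c : ℕ} (A : V → V → Prop)
    (col : V → V → Fin c) : Prop :=
  ∃ (m : ℕ) (v : ZMod m → V), IsProperlyColoredDiCycle A col m v

/-- `d⃗(n,c)`: the minimum `k` such that every `c`-arc-colored digraph of
order `n` with minimum monochromatic out-degree at least `k` has a properly
colored directed cycle. -/
noncomputable def dVecFun (n c : ℕ) : ℕ :=
  sInf {k : ℕ | ∀ (V : Type) (_ : Fintype V) (A : V → V → Prop) (col : V → V → Fin c),
    Irreflexive A → Nat.card V = n → k ≤ minMonOutDeg A col →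
      HasProperlyColoredDiCycle A col}

namespace DVecLower

/-- all Bool-lists of length ≤ L -/
def allLists : ℕ → Finset (List Bool)
  | 0 => {[]}
  | L+1 => ({[]} : Finset (List Bool)) ∪ (allLists L).image (List.cons true)
      ∪ (allLists L).image (List.cons false)

lemma mem_allLists : ∀ (L : ℕ) (l : List Bool), l.length ≤ L → l ∈ allLists L := by
  intro L
  induction L with
  | zero => intro l hl; simp at hl; simp [allLists, hl]
  | succ L ih =>
    intro l hl
    match l with
    | [] => simp [allLists]
    | b :: t =>
      have ht : t ∈ allLists L := ih t (by simp at hl; omega)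
      simp only [allLists, Finset.mem_union, Finset.mem_image]
      cases b
      · exact Or.inr ⟨t, ht, rfl⟩
      · exact Or.inl (Or.inr ⟨t, ht, rfl⟩)

lemma card_allLists : ∀ L : ℕ, (allLists L).card ≤ 2^(L+1) - 1 := by
  intro L
  induction L with
  | zero => simp [allLists]
  | succ L ih =>
    have h1 : (1:ℕ) ≤ 2^(L+1) := Nat.one_le_two_pow
    have h2 : ((allLists L).image (List.cons true)).card ≤ (allLists L).card :=
      Finset.card_image_le
    have h3 : ((allLists L).image (List.cons false)).card ≤ (allLists L).card :=
      Finset.card_image_le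
    calc (allLists (L+1)).card
        ≤ (({[]} : Finset (List Bool)) ∪ (allLists L).image (List.cons true)).card
          + ((allLists L).image (List.cons false)).card := Finset.card_union_le _ _
      _ ≤ (({[]} : Finset (List Bool)).card + ((allLists L).image (List.cons true)).card)
          + ((allLists L).image (List.cons false)).card :=
            Nat.add_le_add_right (Finset.card_union_le _ _) _
      _ ≤ (1 + (allLists L).card) + (allLists L).card := by
            simp only [Finset.card_singleton]; omega
      _ ≤ 2^(L+1+1) - 1 := by
            have : 2^(L+1+1) = 2 * 2^(L+1) := by ring
            omega

lemma length_eq_counts (l : List Bool) : l.length = l.count true + l.count false := by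
  induction l with
  | nil => simp
  | cons b t ih =>
    cases b <;> simp only [List.count_cons, List.length_cons, ih] <;> simp <;> omega


def posList (b : Bool) : List Bool → List ℕ
  | [] => []
  | a :: t => (if a = b then [0] else []) ++ (posList b t).map (· + 1)

lemma length_posList (b : Bool) : ∀ l : List Bool, (posList b l).length = l.count b := by
  intro l
  induction l with
  | nil => simp [posList]
  | cons a t ih =>
    simp only [posList, List.length_append, List.length_map, ih, List.count_cons]
    by_cases h : a = b <;> simp [h] <;> omega

lemma mem_posList {b : Bool} : ∀ {l : List Bool} {p : ℕ}, p ∈ posList b l →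
    p < l.length ∧ l.getD p false = b := by
  intro l
  induction l with
  | nil => intro p hp; simp [posList] at hp
  | cons a t ih =>
    intro p hp
    simp only [posList, List.mem_append, List.mem_map] at hp
    rcases hp with hp | ⟨q, hq, rfl⟩
    · by_cases h : a = b
      · simp [h] at hp; subst hp; simpa using h
      · simp [h] at hp
    · obtain ⟨h1, h2⟩ := ih hq
      exact ⟨by simpa using h1, by simpa using h2⟩

lemma nodup_posList (b : Bool) : ∀ l : List Bool, (posList b l).Nodup := by
  intro l
  induction l with
  | nil => simp [posList]
  | cons a t ih =>
    by_cases h : a = b <;>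
      simp only [posList, h, List.nodup_append, if_true, if_false] <;>
      simp [ih.map (add_left_injective 1)]



noncomputable def Tk (k : ℕ) : Finset (List Bool) :=
  (allLists (2*k)).filter (fun s => s.count false ≤ k ∧ s.count true ≤ k)

lemma mem_Tk {k : ℕ} {s : List Bool} :
    s ∈ Tk k ↔ s.count false ≤ k ∧ s.count true ≤ k := by
  constructor
  · intro h; exact (Finset.mem_filter.mp h).2
  · intro h
    exact Finset.mem_filter.mpr ⟨mem_allLists _ _ (by rw [length_eq_counts]; omega), h⟩

lemma card_Tk (k : ℕ) : (Tk k).card ≤ 2^(2*k+1) - 1 :=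
  le_trans (Finset.card_le_card (Finset.filter_subset _ _)) (card_allLists _)

def wStr (k : ℕ) : List Bool := List.replicate k false ++ List.replicate k true

def Ext (k r : ℕ) : List Bool := wStr k ++ List.replicate r true

lemma count_false_Ext (k r : ℕ) : (Ext k r).count false = k := by
  simp [Ext, wStr, List.count_replicate]

lemma count_true_Ext (k r : ℕ) : (Ext k r).count true = k + r := by
  simp [Ext, wStr, List.count_replicate]

lemma length_Ext (k r : ℕ) : (Ext k r).length = 2*k + r := by
  simp [Ext, wStr]; ring

/-- the vertex set: all strings with ≤ k falses and ≤ k trues, plus a chain of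
extensions of `wStr k` to make the cardinality exactly `n`. -/
noncomputable def Sk (k n : ℕ) : Finset (List Bool) :=
  Tk k ∪ (Finset.range (n - (Tk k).card)).image (fun j => Ext k (j+1))

lemma disj_Sk (k n : ℕ) :
    Disjoint (Tk k) ((Finset.range (n - (Tk k).card)).image (fun j => Ext k (j+1))) := by
  rw [Finset.disjoint_right]
  rintro a ha haT
  simp only [Finset.mem_image, Finset.mem_range] at ha
  obtain ⟨j, _, rfl⟩ := ha
  have := (mem_Tk.mp haT).2
  rw [count_true_Ext] at this
  omega

lemma card_Sk {k n : ℕ} (h : (Tk k).card ≤ n) : (Sk k n).card = n := by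
  rw [Sk, Finset.card_union_of_disjoint (disj_Sk k n), Finset.card_image_of_injective _
    (fun a b hab => by
      have := congrArg List.length hab
      rw [length_Ext, length_Ext] at this
      omega), Finset.card_range]
  omega

lemma Tk_nonempty (k n : ℕ) : ([] : List Bool) ∈ Sk k n := by
  apply Finset.mem_union_left
  exact mem_Tk.mpr (by simp)

lemma count_le_of_mem_Sk {k n : ℕ} {s : List Bool} (hs : s ∈ Sk k n) (b : Bool)
    (hc : s.count b < k) : s ∈ Tk k := by
  rcases Finset.mem_union.mp hs with h | h
  · exact h
  · exfalso
    simp only [Finset.mem_image, Finset.mem_range] at h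
    obtain ⟨j, _, rfl⟩ := h
    cases b
    · rw [count_false_Ext] at hc; omega
    · rw [count_true_Ext] at hc; omega

lemma prefix_mem_Sk {k n : ℕ} {u s : List Bool} (hs : s ∈ Sk k n) (hu : u <+: s) :
    u ∈ Sk k n := by
  rcases Finset.mem_union.mp hs with h | h
  · apply Finset.mem_union_left
    obtain ⟨h1, h2⟩ := mem_Tk.mp h
    exact mem_Tk.mpr ⟨le_trans (hu.sublist.count_le _) h1, le_trans (hu.sublist.count_le _) h2⟩
  · simp only [Finset.mem_image, Finset.mem_range] at h
    obtain ⟨j, hj, rfl⟩ := h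
    by_cases hl : u.length ≤ 2*k
    · -- u is a prefix of wStr k
      have hw : u <+: wStr k := by
        apply List.prefix_of_prefix_length_le hu (List.prefix_append _ _)
        simp [wStr]; omega
      apply Finset.mem_union_left
      refine mem_Tk.mpr ⟨?_, ?_⟩ <;>
        refine le_trans (hw.sublist.count_le _) ?_ <;> simp [wStr, List.count_replicate]
    · -- u = Ext k r for r = u.length - 2*k
      push_neg at hl
      set r := u.length - 2*k with hr
      have hrlen : u.length = 2*k + r := by omega
      have hule : u.length ≤ 2*k + (j+1) := by
        have := hu.length_le; rwa [length_Ext] at this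
      have hpre : Ext k r <+: Ext k (j+1) := by
        refine ⟨List.replicate (j+1-r) true, ?_⟩
        rw [Ext, Ext, List.append_assoc, ← List.replicate_add]
        congr 2
        omega
      have hueq : u = Ext k r := by
        apply List.IsPrefix.eq_of_length
        · exact List.prefix_of_prefix_length_le hu hpre (by rw [length_Ext]; omega)
        · rw [length_Ext]; omega
      apply Finset.mem_union_right
      simp only [Finset.mem_image, Finset.mem_range]
      exact ⟨r - 1, by omega, by rw [hueq]; congr 1; omega⟩


/-- the color of the pair `s, t`: the bit of the longer list at the position
given by the length of the shorter one. -/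
def colL (s t : List Bool) : Fin 2 :=
  if s.length < t.length then (if t.getD s.length false then 1 else 0)
  else (if s.getD t.length false then 1 else 0)

def ArcF (F : Finset (List Bool)) (x y : ↥F) : Prop :=
  (x : List Bool) ≠ (y : List Bool) ∧
    ((x : List Bool) <+: (y : List Bool) ∨ (y : List Bool) <+: (x : List Bool))

def ColF (F : Finset (List Bool)) (x y : ↥F) : Fin 2 := colL x y

lemma irrefl_ArcF (F : Finset (List Bool)) : Irreflexive (ArcF F) := by
  intro x h; exact h.1 rfl

lemma prefix_getD {u t : List Bool} (h : u <+: t) {p : ℕ} (hp : p < u.length) :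
    t.getD p false = u.getD p false := by
  rw [List.getD_eq_getElem _ _ (lt_of_lt_of_le hp h.length_le),
    List.getD_eq_getElem _ _ hp]
  exact (h.getElem hp).symm

lemma prefix_snoc {s t : List Bool} (h : s <+: t) (hlt : s.length < t.length) :
    s ++ [t.getD s.length false] <+: t := by
  have h1 : t.take (s.length + 1) = t.take s.length ++ (t[s.length]?).toList :=
    List.take_succ
  rw [← List.prefix_iff_eq_take.mp h] at h1
  rw [List.getElem?_eq_getElem hlt] at h1
  have h2 : t.getD s.length false = t[s.length] := List.getD_eq_getElem _ _ hlt
  rw [h2]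
  rw [show (some t[s.length]).toList = [t[s.length]] from rfl] at h1
  rw [← h1]
  exact List.take_prefix _ _

lemma no_pcc (F : Finset (List Bool)) :
    ¬ HasProperlyColoredDiCycle (ArcF F) (ColF F) := by
  rintro ⟨m, v, hm, hinj, harc, hcol⟩
  haveI : NeZero m := ⟨by omega⟩
  -- choose index with minimal string length
  obtain ⟨i₀, -, hmin⟩ := Finset.exists_min_image Finset.univ
    (fun i : ZMod m => (v i : List Bool).length) ⟨0, Finset.mem_univ 0⟩
  set s : List Bool := (v i₀ : List Bool) with hs
  have hstrict : ∀ i : ZMod m, i ≠ i₀ →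
      ((v i : List Bool) <+: (v i₀ : List Bool) ∨ (v i₀ : List Bool) <+: (v i : List Bool)) →
      s <+: (v i : List Bool) ∧ s.length < (v i : List Bool).length := by
    intro i hne hcomp
    have hlen : s.length ≤ (v i : List Bool).length := hmin i (Finset.mem_univ i)
    have hvne : (v i : List Bool) ≠ s := by
      intro h
      exact hne (hinj (Subtype.ext h))
    have hpre : s <+: (v i : List Bool) := by
      rcases hcomp with h | h
      · exact absurd (h.eq_of_length (le_antisymm h.length_le hlen)) hvne
      · exact h
    refine ⟨hpre, lt_of_le_of_ne hlen ?_⟩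
    intro h
    exact hvne (hpre.eq_of_length h).symm
  have hne1 : i₀ + 1 ≠ i₀ := by
    intro h
    have h1 : (1 : ZMod m) = 0 := by
      have := congrArg (fun z => z - i₀) h
      simpa using this
    rw [show ((1:ZMod m)) = ((1:ℕ) : ZMod m) by simp,
      ZMod.natCast_eq_zero_iff] at h1
    have := Nat.le_of_dvd one_pos h1
    omega
  have hnem1 : i₀ - 1 ≠ i₀ := by
    intro h
    apply hne1
    have h' := congrArg (fun z => z + 1) h
    simpa using h'.symm
  have harc2 := harc i₀
  have harc1 := harc (i₀ - 1)
  rw [sub_add_cancel] at harc1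
  have h2 := hstrict (i₀ + 1) hne1 harc2.2.symm
  have h1 := hstrict (i₀ - 1) hnem1 harc1.2
  set t₁ : List Bool := (v (i₀ - 1) : List Bool) with ht1
  set t₂ : List Bool := (v (i₀ + 1) : List Bool) with ht2
  set b₁ : Bool := t₁.getD s.length false with hb1
  set b₂ : Bool := t₂.getD s.length false with hb2
  -- the two colors at i₀ differ, hence the two bits differ
  have hbne : b₁ ≠ b₂ := by
    have hc := hcol (i₀ - 1)
    rw [sub_add_cancel, show i₀ - 1 + 2 = i₀ + 1 by ring] at hc
    intro hb
    apply hc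
    show colL t₁ s = colL s t₂
    rw [colL, colL, if_neg (by omega), if_pos h2.2, ← hb1, ← hb2, hb]
  -- every vertex of the cycle other than `v i₀` extends `s ++ [b₂]`
  have main : ∀ j : ℕ, 1 ≤ j → j ≤ m - 1 → s ++ [b₂] <+: (v (i₀ + (j : ℕ)) : List Bool) := by
    intro j
    induction j with
    | zero => omega
    | succ j ih =>
      intro _ hle
      by_cases hj : j = 0
      · subst hj
        have : s ++ [b₂] <+: t₂ := by
          rw [hb2]; exact prefix_snoc h2.1 h2.2
        simpa using this
      · have ihj := ih (by omega) (by omega)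
        have harcj := harc (i₀ + (j : ℕ))
        have hcast : (i₀ + (j:ℕ)) + 1 = i₀ + ((j+1 : ℕ) : ZMod m) := by push_cast; ring
        rw [hcast] at harcj
        rcases harcj.2 with h | h
        · exact ihj.trans h
        · -- v (i₀ + (j+1)) is a prefix of v (i₀ + j)
          have hlen : s.length ≤ (v (i₀ + ((j+1:ℕ) : ZMod m)) : List Bool).length :=
            hmin _ (Finset.mem_univ _)
          have hne' : (i₀ + ((j+1:ℕ) : ZMod m)) ≠ i₀ := by
            intro he
            have : (((j+1:ℕ)) : ZMod m) = 0 := by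
              have := congrArg (fun z => z - i₀) he
              simpa [add_comm] using this
            rw [ZMod.natCast_eq_zero_iff] at this
            have := Nat.le_of_dvd (by omega) this
            omega
          have hlt : s.length < (v (i₀ + ((j+1:ℕ) : ZMod m)) : List Bool).length := by
            rcases lt_or_eq_of_le hlen with h' | h'
            · exact h'
            · exfalso
              have hsu : s <+: (v (i₀ + (j:ℕ)) : List Bool) :=
                (List.prefix_append s [b₂]).trans ihj
              have := List.prefix_of_prefix_length_le h hsu (by omega)
              have heq : (v (i₀ + ((j+1:ℕ) : ZMod m)) : List Bool) = s :=
                this.eq_of_length (by omega)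
              exact hne' (hinj (Subtype.ext heq))
          exact List.prefix_of_prefix_length_le ihj h (by simp only [List.length_append, List.length_singleton]; omega)
  have hfin := main (m-1) (by omega) le_rfl
  have hc2 : (((m-1:ℕ)) : ZMod m) = -1 := by
    have : ((m:ℕ) : ZMod m) = 0 := by
      rw [ZMod.natCast_eq_zero_iff]
    rw [show (m-1 : ℕ) = m - 1 from rfl]
    rw [Nat.cast_sub (by omega)]
    simp [this]
  rw [hc2] at hfin
  have : t₁.getD s.length false = b₂ := by
    have h' : s ++ [b₂] <+: t₁ := by
      rw [ht1, show i₀ - 1 = i₀ + -1 by ring]; exact hfin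
    rw [prefix_getD h' (by simp)]
    simp
  rw [← hb1] at this
  exact hbne this

lemma if_bool_eq_fin (i : Fin 2) :
    (if decide (i = 1) then (1 : Fin 2) else 0) = i := by
  fin_cases i <;> simp

lemma count_lt_mem_Tk {k n : ℕ} {x : ↥(Sk k n)} {b : Bool}
    (h : (x : List Bool).count b < k) : (x : List Bool) ∈ Tk k :=
  count_le_of_mem_Sk x.2 b h

lemma targets (k n : ℕ) (x : ↥(Sk k n)) (b : Bool) :
    ∃ D : Finset (List Bool), k ≤ D.card ∧ ∀ t ∈ D, ∃ h : t ∈ Sk k n,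
      ArcF (Sk k n) x ⟨t, h⟩ ∧ ColF (Sk k n) x ⟨t, h⟩ = (if b then 1 else 0) := by
  classical
  obtain ⟨s, hsS⟩ := x
  set c : ℕ := s.count b with hc
  refine ⟨(posList b s).toFinset.image (fun p => s.take p) ∪
    (Finset.range (k - c)).image (fun r => s ++ List.replicate (r+1) b), ?_, ?_⟩
  · -- cardinality
    have hcardF1 : ((posList b s).toFinset.image (fun p => s.take p)).card = c := by
      rw [Finset.card_image_of_injOn, List.toFinset_card_of_nodup (nodup_posList b s),
        length_posList]
      intro p hp q hq hpq
      simp only [Finset.mem_coe, List.mem_toFinset] at hp hq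
      have h1 := (mem_posList hp).1
      have h2 := (mem_posList hq).1
      have := congrArg List.length hpq
      rwa [List.length_take, List.length_take, min_eq_left (le_of_lt h1),
        min_eq_left (le_of_lt h2)] at this
    have hcardF2 : ((Finset.range (k - c)).image
        (fun r => s ++ List.replicate (r+1) b)).card = k - c := by
      rw [Finset.card_image_of_injective, Finset.card_range]
      intro p q hpq
      have := congrArg List.length hpq
      simp only [List.length_append, List.length_replicate] at this
      omega
    have hdisj : Disjoint ((posList b s).toFinset.image (fun p => s.take p))
        ((Finset.range (k - c)).image (fun r => s ++ List.replicate (r+1) b)) := by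
      rw [Finset.disjoint_left]
      intro t ht1 ht2
      simp only [Finset.mem_image, List.mem_toFinset] at ht1
      obtain ⟨p, hp, rfl⟩ := ht1
      have hp1 := (mem_posList hp).1
      simp only [Finset.mem_image, Finset.mem_range] at ht2
      obtain ⟨r, _, hre⟩ := ht2
      have := congrArg List.length hre
      simp only [List.length_append, List.length_replicate, List.length_take] at this
      omega
    rw [Finset.card_union_of_disjoint hdisj, hcardF1, hcardF2]
    omega
  · -- membership
    intro t ht
    rcases Finset.mem_union.mp ht with ht | ht
    · simp only [Finset.mem_image, List.mem_toFinset] at ht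
      obtain ⟨p, hp, rfl⟩ := ht
      obtain ⟨hp1, hp2⟩ := mem_posList hp
      have hpre : s.take p <+: s := List.take_prefix _ _
      have hlt : (s.take p).length < s.length := by
        rw [List.length_take, min_eq_left (le_of_lt hp1)]; exact hp1
      refine ⟨prefix_mem_Sk hsS hpre, ⟨?_, Or.inr hpre⟩, ?_⟩
      · intro h
        have h' : s = s.take p := h
        rw [← h'] at hlt
        omega
      · show colL s (s.take p) = _
        rw [colL, if_neg (by omega)]
        rw [List.length_take, min_eq_left (le_of_lt hp1), hp2]
    · simp only [Finset.mem_image, Finset.mem_range] at ht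
      obtain ⟨r, hr, rfl⟩ := ht
      have hck : c < k := by omega
      have hsT : s ∈ Tk k := count_le_of_mem_Sk hsS b (by omega)
      obtain ⟨hcf, hct⟩ := mem_Tk.mp hsT
      have hmemT : s ++ List.replicate (r+1) b ∈ Sk k n := by
        apply Finset.mem_union_left
        apply mem_Tk.mpr
        cases b
        · refine ⟨?_, ?_⟩
          · rw [List.count_append, List.count_replicate]
            simp only [hc] at hr
            simp
            omega
          · rw [List.count_append, List.count_replicate]
            simpa using hct
        · refine ⟨?_, ?_⟩
          · rw [List.count_append, List.count_replicate]
            simpa using hcf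
          · rw [List.count_append, List.count_replicate]
            simp only [hc] at hr
            simp
            omega
      refine ⟨hmemT, ⟨?_, Or.inl (List.prefix_append _ _)⟩, ?_⟩
      · intro h
        have h' : s = s ++ List.replicate (r+1) b := h
        have := congrArg List.length h'
        simp only [List.length_append, List.length_replicate] at this
        omega
      · show colL s (s ++ List.replicate (r+1) b) = _
        rw [colL, if_pos (by simp)]
        rw [List.getD_append_right _ _ _ _ le_rfl]
        simp only [Nat.sub_self]
        rw [show (List.replicate (r+1) b).getD 0 false = b by simp]

lemma deg_ge (k n : ℕ) (x : ↥(Sk k n)) (i : Fin 2) :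
    k ≤ monOutDeg (ArcF (Sk k n)) (ColF (Sk k n)) x i := by
  classical
  obtain ⟨D, hDcard, hD⟩ := targets k n x (decide (i = 1))
  simp only [if_bool_eq_fin] at hD
  rw [monOutDeg]
  have h1 : k ≤ Nat.card ↥D := by
    rw [Nat.card_eq_fintype_card, Fintype.card_coe]; exact hDcard
  refine le_trans h1 (Nat.card_le_card_of_injective
    (fun t => ⟨⟨t.1, (hD t.1 t.2).1⟩, (hD t.1 t.2).2⟩) ?_)
  intro t1 t2 h
  apply Subtype.ext
  exact congrArg (fun y => (y.1 : List Bool)) h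

lemma nonempty_Sk (k n : ℕ) : Nonempty ↥(Sk k n) := ⟨⟨[], Tk_nonempty k n⟩⟩

lemma minDeg_ge (k n : ℕ) : k ≤ minMonOutDeg (ArcF (Sk k n)) (ColF (Sk k n)) := by
  apply le_csInf
  · exact ⟨monOutDeg (ArcF (Sk k n)) (ColF (Sk k n)) ⟨[], Tk_nonempty k n⟩ 0,
      ⟨⟨[], Tk_nonempty k n⟩, 0, rfl⟩⟩
  · rintro m ⟨x, i, rfl⟩
    exact deg_ge k n x i

lemma card_V {k n : ℕ} (h : (Tk k).card ≤ n) : Nat.card ↥(Sk k n) = n := by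
  rw [Nat.card_eq_fintype_card, Fintype.card_coe, card_Sk h]

lemma arith (n : ℕ) (hn : 2 ≤ n) : ∃ k : ℕ, 2^(2*k+1) ≤ n ∧
    (1/2 : ℝ) * (Real.logb 2 n - Real.logb 2 (Real.logb 2 n)) ≤ (k : ℝ) + 1 := by
  have hL1 : 1 ≤ Nat.log 2 n := Nat.log_pos one_lt_two hn
  set L := Nat.log 2 n with hL
  refine ⟨(L-1)/2, ?_, ?_⟩
  · calc 2^(2*((L-1)/2)+1) ≤ 2^L := Nat.pow_le_pow_right (by norm_num) (by omega)
    _ ≤ n := Nat.pow_log_le_self 2 (by omega)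
  · set k := (L-1)/2 with hk
    have hlow : 2^(2*k+1) ≤ n := by
      calc 2^(2*k+1) ≤ 2^L := Nat.pow_le_pow_right (by norm_num) (by omega)
      _ ≤ n := Nat.pow_log_le_self 2 (by omega)
    have hup : n < 2^(2*k+3) := by
      have h1 := Nat.lt_pow_succ_log_self (b := 2) one_lt_two n
      exact lt_of_lt_of_le h1 (Nat.pow_le_pow_right (by norm_num) (by omega))
    have hn0 : (0:ℝ) < (n:ℝ) := by
      have : (2:ℝ) ≤ (n:ℝ) := by exact_mod_cast hn
      linarith
    set x : ℝ := Real.logb 2 n with hx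
    have hx1 : (1:ℝ) ≤ x := by
      rw [hx, show (1:ℝ) = Real.logb 2 2 by simp]
      exact Real.logb_le_logb_of_le one_lt_two (by norm_num) (by exact_mod_cast hn)
    have hpowcast : ∀ j : ℕ, ((2^j : ℕ) : ℝ) = (2:ℝ)^j := by intro j; push_cast; ring
    have hxup : x < 2*(k:ℝ)+3 := by
      have h2 : (n:ℝ) < (2:ℝ)^(2*k+3) := by
        rw [← hpowcast]; exact_mod_cast hup
      have h3 : x < Real.logb 2 ((2:ℝ)^(2*k+3)) :=
        Real.logb_lt_logb one_lt_two hn0 h2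
      rw [Real.logb_pow, Real.logb_self_eq_one (by norm_num), mul_one] at h3
      push_cast at h3
      linarith
    have hxlow : 2*(k:ℝ)+1 ≤ x := by
      have h2 : ((2:ℝ)^(2*k+1)) ≤ (n:ℝ) := by
        rw [← hpowcast]; exact_mod_cast hlow
      have h3 : Real.logb 2 ((2:ℝ)^(2*k+1)) ≤ x :=
        Real.logb_le_logb_of_le one_lt_two (by positivity) h2
      rw [Real.logb_pow, Real.logb_self_eq_one (by norm_num), mul_one] at h3
      push_cast at h3
      linarith
    by_cases hcase : x ≤ 2*(k:ℝ)+2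
    · have h4 : 0 ≤ Real.logb 2 x := Real.logb_nonneg one_lt_two hx1
      linarith
    · push_neg at hcase
      have h5 : (1:ℝ) ≤ Real.logb 2 x := by
        rw [show (1:ℝ) = Real.logb 2 2 by simp]
        apply Real.logb_le_logb_of_le one_lt_two (by norm_num)
        have : (0:ℝ) ≤ (k:ℝ) := Nat.cast_nonneg k
        linarith
      linarith

lemma monOutDeg_le {V : Type} [Fintype V] (A : V → V → Prop) (col : V → V → Fin 2)
    (hirr : Irreflexive A) (x : V) (i : Fin 2) :
    monOutDeg A col x i ≤ Fintype.card V - 1 := by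
  classical
  have h1 : monOutDeg A col x i ≤ Fintype.card {y : V // y ≠ x} := by
    rw [monOutDeg, Nat.card_eq_fintype_card]
    apply Fintype.card_le_of_injective
      (fun y => (⟨y.1, fun h => by have hA := y.2.1; rw [h] at hA; exact hirr x hA⟩ : {y : V // y ≠ x}))
    intro y1 y2 h
    exact Subtype.ext (Subtype.mk.inj h)
  have h2 : Fintype.card {y : V // ¬ (y = x)} = Fintype.card V - 1 := by
    rw [Fintype.card_subtype_compl, Fintype.card_subtype_eq]
  have h2' : Fintype.card {y : V // y ≠ x} = Fintype.card V - 1 := h2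
  omega

end DVecLower

/-- For every `n ≥ 2` there is a `2`-arc-colored digraph on exactly `n`
vertices with no properly colored directed cycle and
`δ⁺_mon(D) + 1 ≥ (1/2)(log₂ n − log₂ log₂ n)`; in particular
`d⃗(n,2) ≥ (1/2)(log₂ n − log₂ log₂ n)`. -/
theorem dVecFun_two_lower_bound (n : ℕ) (hn : 2 ≤ n) :
    (∃ (V : Type) (_ : Fintype V) (A : V → V → Prop) (col : V → V → Fin 2),
        Irreflexive A ∧ Nat.card V = n ∧ ¬ HasProperlyColoredDiCycle A col ∧
        (1 / 2 : ℝ) * (Real.logb 2 n - Real.logb 2 (Real.logb 2 n)) ≤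
          (minMonOutDeg A col : ℝ) + 1) ∧
    (1 / 2 : ℝ) * (Real.logb 2 n - Real.logb 2 (Real.logb 2 n)) ≤ (dVecFun n 2 : ℝ) := by
  obtain ⟨k, hkn, hkb⟩ := DVecLower.arith n hn
  have hTcard : (DVecLower.Tk k).card ≤ n := by
    have h0 := DVecLower.card_Tk k
    omega
  have hcard : Nat.card ↥(DVecLower.Sk k n) = n := DVecLower.card_V hTcard
  have hirr := DVecLower.irrefl_ArcF (DVecLower.Sk k n)
  have hnop := DVecLower.no_pcc (DVecLower.Sk k n)
  have hmin := DVecLower.minDeg_ge k n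
  have hbound : (1/2 : ℝ) * (Real.logb 2 n - Real.logb 2 (Real.logb 2 n)) ≤
      (minMonOutDeg (DVecLower.ArcF (DVecLower.Sk k n))
        (DVecLower.ColF (DVecLower.Sk k n)) : ℝ) + 1 := by
    refine le_trans hkb ?_
    have h1 : (k:ℝ) ≤ (minMonOutDeg (DVecLower.ArcF (DVecLower.Sk k n))
        (DVecLower.ColF (DVecLower.Sk k n)) : ℝ) := by exact_mod_cast hmin
    linarith
  refine ⟨⟨↥(DVecLower.Sk k n), inferInstance, _, _, hirr, hcard, hnop, hbound⟩, ?_⟩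
  -- second part
  have hne : ({k : ℕ | ∀ (V : Type) (_ : Fintype V) (A : V → V → Prop)
      (col : V → V → Fin 2), Irreflexive A → Nat.card V = n → k ≤ minMonOutDeg A col →
      HasProperlyColoredDiCycle A col} : Set ℕ).Nonempty := by
    refine ⟨n, ?_⟩
    intro W instW A' col' hirr' hcardW hle
    exfalso
    haveI := instW
    have hpos : 0 < Nat.card W := by omega
    have hWne : Nonempty W := (Nat.card_pos_iff.mp hpos).1
    obtain ⟨x₀⟩ := hWne
    have h1 : minMonOutDeg A' col' ≤ monOutDeg A' col' x₀ 0 := Nat.sInf_le ⟨x₀, 0, rfl⟩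
    have h2 := DVecLower.monOutDeg_le A' col' hirr' x₀ 0
    rw [← Nat.card_eq_fintype_card, hcardW] at h2
    omega
  have hmem := Nat.sInf_mem hne
  have hgt : minMonOutDeg (DVecLower.ArcF (DVecLower.Sk k n))
      (DVecLower.ColF (DVecLower.Sk k n)) < dVecFun n 2 := by
    by_contra hle
    push_neg at hle
    exact hnop (hmem ↥(DVecLower.Sk k n) inferInstance _ _ hirr hcard hle)
  have h3 : (k:ℝ) + 1 ≤ ((dVecFun n 2 : ℕ) : ℝ) := by
    have : k + 1 ≤ dVecFun n 2 := by omega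
    exact_mod_cast this
  exact le_trans hkb h3
end
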